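/- arXiv:0802.0996 — 3 statements merged into one kernel-verified Lean document; each statement's English description precedes it below -/
import Mathlib

section
/- Let F₁ and F₂ be formal group laws over commutative rings A₁ and A₂, with classifying maps λ₁ : L → A₁ and λ₂ : L → A₂. Then for every commutative ring R there is a bijection, natural in R, between the set of ring homomorphisms A₁ ⊗_{λ₁, L, η_L} W ⊗_{η_R, L, λ₂} A₂ → R and the set of triples (f₁, f₂, φ) where f₁ : A₁ → R and f₂ : A₂ → R are ring homomorphisms and φ : (f₁)_*F₁ → (f₂)_*F₂ is an isomorphism of formal group laws over R. (Strickland's observation: the 2-category pullback Spec(A₁) ×_{M_fg} Spec(A₂) is the affine scheme Spec(A₁ ⊗_L W ⊗_L A₂).) -/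
noncomputable section

namespace FGL

open Finset

variable {A B : Type*} [CommRing A] [CommRing B] {τ : Type*}

/-- The total degree of a monomial exponent. -/
def deg {σ : Type*} (d : σ →₀ ℕ) : ℕ := d.sum fun _ n => n

/-- The exponent `(i, j)` as an element of `Fin 2 →₀ ℕ`. -/
def mon2 (i j : ℕ) : Fin 2 →₀ ℕ := Finsupp.single 0 i + Finsupp.single 1 j

/-- Substitution `F(g, h)` of two power series (each assumed to have zero constant
term) into a two-variable power series `F`. -/
def subst2 (F : MvPowerSeries (Fin 2) A) (g h : MvPowerSeries τ A) :
    MvPowerSeries τ A :=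
  fun d => ∑ e ∈ range (deg d + 1) ×ˢ range (deg d + 1),
    MvPowerSeries.coeff (mon2 e.1 e.2) F * MvPowerSeries.coeff d (g ^ e.1 * h ^ e.2)

/-- Substitution `f(g)` of a power series `g` (assumed to have zero constant term)
into a one-variable power series `f`. -/
def substPS (f : PowerSeries A) (g : MvPowerSeries τ A) : MvPowerSeries τ A :=
  fun d => ∑ n ∈ range (deg d + 1),
    PowerSeries.coeff n f * MvPowerSeries.coeff d (g ^ n)

/-- Composition `f(g)` of one-variable power series (`g` has zero constant term). -/
def comp (f g : PowerSeries A) : PowerSeries A := substPS f g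

/-- `F` is a (commutative, one-dimensional) formal group law:
`F(x,0) = x`, `F(0,y) = y`, `F(x,y) = F(y,x)` and `F(F(x,y),z) = F(x,F(y,z))`. -/
def IsFGL (F : MvPowerSeries (Fin 2) A) : Prop :=
  subst2 F (MvPowerSeries.X 0) 0 = MvPowerSeries.X 0 ∧
  subst2 F 0 (MvPowerSeries.X 1) = MvPowerSeries.X 1 ∧
  subst2 F (MvPowerSeries.X 1) (MvPowerSeries.X 0) = F ∧
  subst2 F (subst2 F (MvPowerSeries.X 0) (MvPowerSeries.X 1))
      (MvPowerSeries.X 2 : MvPowerSeries (Fin 3) A)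
    = subst2 F (MvPowerSeries.X 0) (subst2 F (MvPowerSeries.X 1) (MvPowerSeries.X 2))

/-- `f` is a homomorphism of formal group laws `F → G`:
`f(0) = 0` and `f(F(x,y)) = G(f(x), f(y))`. -/
def IsHom (F G : MvPowerSeries (Fin 2) A) (f : PowerSeries A) : Prop :=
  PowerSeries.constantCoeff f = 0 ∧
  substPS f F = subst2 G (substPS f (MvPowerSeries.X 0)) (substPS f (MvPowerSeries.X 1))

/-- `f` is an isomorphism of formal group laws `F → G`: a homomorphism whose
linear coefficient is a unit. -/
def IsIso (F G : MvPowerSeries (Fin 2) A) (f : PowerSeries A) : Prop :=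
  IsHom F G f ∧ IsUnit (PowerSeries.coeff 1 f)

/-- `f` is a strict isomorphism of formal group laws `F → G`: a homomorphism whose
linear coefficient is `1`. -/
def IsStrictIso (F G : MvPowerSeries (Fin 2) A) (f : PowerSeries A) : Prop :=
  IsHom F G f ∧ PowerSeries.coeff 1 f = 1

/-- The `n`-series `[n]_F` of a formal group law, defined by `[0]_F = 0` and
`[n+1]_F(x) = F(x, [n]_F(x))`. -/
def nSeries (F : MvPowerSeries (Fin 2) A) : ℕ → PowerSeries A
  | 0 => 0
  | n + 1 => subst2 F PowerSeries.X (nSeries F n)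

/-- `F` has height `≥ n` (at the prime `p`): the coefficient of `x^i` in `[p]_F`
vanishes for all `i < p^n`. -/
def HeightGE (p : ℕ) (F : MvPowerSeries (Fin 2) A) (n : ℕ) : Prop :=
  ∀ i < p ^ n, PowerSeries.coeff i (nSeries F p) = 0

/-- `F` has strict height `n` (at the prime `p`): it has height `≥ n` and the
coefficient of `x^{p^n}` in `[p]_F` is a unit. -/
def StrictHeight (p : ℕ) (F : MvPowerSeries (Fin 2) A) (n : ℕ) : Prop :=
  HeightGE p F n ∧ IsUnit (PowerSeries.coeff (p ^ n) (nSeries F p))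

/-- Coefficients of the compositional inverse of a power series `f` with `f(0) = 0`
and invertible linear coefficient. -/
def invCoeff (f : PowerSeries A) : ℕ → A
  | 0 => 0
  | 1 => Ring.inverse (PowerSeries.coeff 1 f)
  | n + 2 =>
    - Ring.inverse ((PowerSeries.coeff 1 f) ^ (n + 2)) *
      ∑ k ∈ (range (n + 2)).attach,
        invCoeff f k.1 * PowerSeries.coeff (n + 2) (f ^ (k.1 : ℕ))
  decreasing_by exact Finset.mem_range.mp k.2

/-- The compositional inverse of a power series `f` with `f(0) = 0` and invertible
linear coefficient. -/
def compInv (f : PowerSeries A) : PowerSeries A := PowerSeries.mk (invCoeff f)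

end FGL


namespace FGL
open Finset
variable {A B : Type*} [CommRing A] [CommRing B] {τ : Type*}

lemma coeff_subst2 (F : MvPowerSeries (Fin 2) A) (g h : MvPowerSeries τ A) (d : τ →₀ ℕ) :
    MvPowerSeries.coeff d (subst2 F g h) =
      ∑ e ∈ range (deg d + 1) ×ˢ range (deg d + 1),
        MvPowerSeries.coeff (mon2 e.1 e.2) F * MvPowerSeries.coeff d (g ^ e.1 * h ^ e.2) :=
  rfl

lemma coeff_substPS (f : PowerSeries A) (g : MvPowerSeries τ A) (d : τ →₀ ℕ) :
    MvPowerSeries.coeff d (substPS f g) =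
      ∑ n ∈ range (deg d + 1), PowerSeries.coeff n f * MvPowerSeries.coeff d (g ^ n) :=
  rfl

lemma map_subst2 (g : A →+* B) (F : MvPowerSeries (Fin 2) A) (h1 h2 : MvPowerSeries τ A) :
    MvPowerSeries.map g (subst2 F h1 h2) =
      subst2 (MvPowerSeries.map g F) (MvPowerSeries.map g h1)
        (MvPowerSeries.map g h2) := by
  ext d
  rw [MvPowerSeries.coeff_map, coeff_subst2, coeff_subst2, map_sum]
  refine Finset.sum_congr rfl fun e _ => ?_
  simp [MvPowerSeries.coeff_map, ← map_pow, ← map_mul]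

lemma map_substPS (g : A →+* B) (f : PowerSeries A) (h : MvPowerSeries τ A) :
    MvPowerSeries.map g (substPS f h) =
      substPS (PowerSeries.map g f) (MvPowerSeries.map g h) := by
  ext d
  rw [MvPowerSeries.coeff_map, coeff_substPS, coeff_substPS, map_sum]
  refine Finset.sum_congr rfl fun e _ => ?_
  simp [MvPowerSeries.coeff_map, PowerSeries.coeff_map, ← map_pow]

lemma deg_add {σ : Type*} (u v : σ →₀ ℕ) : deg (u + v) = deg u + deg v :=
  Finsupp.sum_add_index' (fun _ => rfl) (fun _ _ _ => rfl)

lemma deg_single {σ : Type*} (s : σ) (n : ℕ) : deg (Finsupp.single s n) = n :=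
  Finsupp.sum_single_index rfl

lemma deg_mon2 (i j : ℕ) : deg (mon2 i j) = i + j := by
  rw [mon2, deg_add, deg_single, deg_single]

lemma apply_le_deg {σ : Type*} (d : σ →₀ ℕ) (i : σ) : d i ≤ deg d := by
  by_cases h : i ∈ d.support
  · exact Finset.single_le_sum (fun _ _ => Nat.zero_le _) h
  · simp [Finsupp.notMem_support_iff.mp h]

lemma fin2_eq_mon2 (d : Fin 2 →₀ ℕ) : d = mon2 (d 0) (d 1) := by
  ext x
  fin_cases x <;> simp [mon2, Finsupp.single_apply]

lemma IsFGL.map {F : MvPowerSeries (Fin 2) A} (h : IsFGL F) (g : A →+* B) :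
    IsFGL (MvPowerSeries.map g F) := by
  obtain ⟨h1, h2, h3, h4⟩ := h
  refine ⟨?_, ?_, ?_, ?_⟩
  · have : MvPowerSeries.map g (subst2 F (MvPowerSeries.X 0) 0)
        = MvPowerSeries.map g (MvPowerSeries.X 0) := congrArg _ h1
    rw [map_subst2, map_zero, MvPowerSeries.map_X] at this
    exact this
  · have : MvPowerSeries.map g (subst2 F 0 (MvPowerSeries.X 1))
        = MvPowerSeries.map g (MvPowerSeries.X 1) := congrArg _ h2
    rw [map_subst2, map_zero, MvPowerSeries.map_X] at this
    exact this
  · have := congrArg (MvPowerSeries.map g) h3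
    rwa [map_subst2, MvPowerSeries.map_X, MvPowerSeries.map_X] at this
  · have := congrArg (MvPowerSeries.map g) h4
    rwa [map_subst2, map_subst2, map_subst2, map_subst2,
      MvPowerSeries.map_X, MvPowerSeries.map_X, MvPowerSeries.map_X] at this

lemma IsHom.map {F G : MvPowerSeries (Fin 2) A} {f : PowerSeries A}
    (h : IsHom F G f) (g : A →+* B) :
    IsHom (MvPowerSeries.map g F) (MvPowerSeries.map g G)
      (PowerSeries.map g f) := by
  obtain ⟨h0, hs⟩ := h
  constructor
  · rw [← PowerSeries.coeff_zero_eq_constantCoeff_apply, PowerSeries.coeff_map,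
      PowerSeries.coeff_zero_eq_constantCoeff_apply, h0, map_zero]
  · have := congrArg (MvPowerSeries.map g) hs
    rwa [map_substPS, map_subst2, map_substPS, map_substPS,
      MvPowerSeries.map_X, MvPowerSeries.map_X] at this

lemma IsIso.map {F G : MvPowerSeries (Fin 2) A} {f : PowerSeries A}
    (h : IsIso F G f) (g : A →+* B) :
    IsIso (MvPowerSeries.map g F) (MvPowerSeries.map g G)
      (PowerSeries.map g f) := by
  refine ⟨h.1.map g, ?_⟩
  rw [PowerSeries.coeff_map]
  exact h.2.map g

lemma mv_map_map {σ : Type*} (f : A →+* B) {C : Type*} [CommRing C] (g : B →+* C)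
    (F : MvPowerSeries σ A) :
    MvPowerSeries.map g (MvPowerSeries.map f F) = MvPowerSeries.map (g.comp f) F := by
  ext d; simp [MvPowerSeries.coeff_map]

lemma coeff_pow_lt {φ : PowerSeries A} (h0 : PowerSeries.constantCoeff φ = 0)
    {a i : ℕ} (h : i < a) : PowerSeries.coeff i (φ ^ a) = 0 := by
  have hx : (PowerSeries.X : PowerSeries A) ^ a ∣ φ ^ a :=
    pow_dvd_pow_of_dvd (PowerSeries.X_dvd_iff.mpr h0) a
  exact PowerSeries.X_pow_dvd_iff.mp hx i h

lemma coeff_pow_self {φ : PowerSeries A} (h0 : PowerSeries.constantCoeff φ = 0)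
    (a : ℕ) : PowerSeries.coeff a (φ ^ a) = (PowerSeries.coeff 1 φ) ^ a := by
  induction a with
  | zero => simp
  | succ n ih =>
    rw [pow_succ, PowerSeries.coeff_mul]
    rw [Finset.sum_eq_single (n, 1)]
    · rw [ih, pow_succ]
    · rintro ⟨p, q⟩ hpq hne
      rw [Finset.HasAntidiagonal.mem_antidiagonal] at hpq
      rcases lt_trichotomy p n with hp | hp | hp
      · rw [coeff_pow_lt h0 hp, zero_mul]
      · subst hp
        have : q = 1 := by omega
        exact absurd (by rw [this]) hne
      · have hq : q = 0 := by omega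
        subst hq
        rw [PowerSeries.coeff_zero_eq_constantCoeff_apply, h0, mul_zero]
    · intro h
      simp [Finset.HasAntidiagonal.mem_antidiagonal] at h

lemma coeff_substPS_X (φ : PowerSeries A) (i : Fin 2) (d : Fin 2 →₀ ℕ) :
    MvPowerSeries.coeff d (substPS φ (MvPowerSeries.X i)) =
      if d = Finsupp.single i (d i) then PowerSeries.coeff (d i) φ else 0 := by
  rw [coeff_substPS]
  have hc : ∀ n ∈ range (deg d + 1),
      PowerSeries.coeff n φ * MvPowerSeries.coeff d (MvPowerSeries.X i ^ n) =
      if d = Finsupp.single i n then PowerSeries.coeff n φ else 0 := by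
    intro n _
    rw [MvPowerSeries.coeff_X_pow]
    split_ifs <;> simp
  rw [Finset.sum_congr rfl hc, Finset.sum_eq_single (d i)]
  · intro n _ hne
    rw [if_neg]
    intro hdn
    exact hne (by rw [hdn, Finsupp.single_eq_same])
  · intro h
    exact absurd (Finset.mem_range.mpr (Nat.lt_succ_of_le (apply_le_deg d i))) h

lemma coeff_pow_substPS_X (φ : PowerSeries A) (i : Fin 2) (a : ℕ) (d : Fin 2 →₀ ℕ) :
    MvPowerSeries.coeff d ((substPS φ (MvPowerSeries.X i)) ^ a) =
      if d = Finsupp.single i (d i) then PowerSeries.coeff (d i) (φ ^ a) else 0 := by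
  induction a generalizing d with
  | zero =>
    rw [pow_zero, pow_zero, MvPowerSeries.coeff_one]
    by_cases hd : d = 0
    · subst hd
      simp
    · rw [if_neg hd]
      split_ifs with h
      · have hne : d i ≠ 0 := by
          intro h0
          exact hd (by rw [h, h0, Finsupp.single_zero])
        rw [PowerSeries.coeff_one, if_neg hne]
      · rfl
  | succ n ih =>
    rw [pow_succ, MvPowerSeries.coeff_mul]
    by_cases hd : d = Finsupp.single i (d i)
    · rw [if_pos hd, pow_succ, PowerSeries.coeff_mul]
      have hinj : Function.Injective
          (fun p : ℕ × ℕ => (Finsupp.single i p.1, Finsupp.single i p.2)) := by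
        intro p q hpq
        simp only [Prod.mk.injEq] at hpq
        exact Prod.ext (Finsupp.single_injective i hpq.1) (Finsupp.single_injective i hpq.2)
      have hsub : (Finset.HasAntidiagonal.antidiagonal (d i)).map ⟨_, hinj⟩ ⊆ Finset.HasAntidiagonal.antidiagonal d := by
        intro p hp
        rw [Finset.mem_map] at hp
        obtain ⟨q, hq, rfl⟩ := hp
        rw [Finset.HasAntidiagonal.mem_antidiagonal] at hq ⊢
        simp only [Function.Embedding.coeFn_mk]
        rw [← Finsupp.single_add, hq, ← hd]
      rw [← Finset.sum_subset hsub ?_, Finset.sum_map]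
      · refine Finset.sum_congr rfl fun p _ => ?_
        simp only [Function.Embedding.coeFn_mk]
        rw [ih, coeff_substPS_X, Finsupp.single_eq_same, Finsupp.single_eq_same,
          if_pos rfl, if_pos rfl]
      · rintro ⟨u, v⟩ huv hnm
        rw [Finset.HasAntidiagonal.mem_antidiagonal] at huv
        rw [ih, coeff_substPS_X]
        by_cases hu : u = Finsupp.single i (u i)
        · by_cases hv : v = Finsupp.single i (v i)
          · exfalso
            apply hnm
            rw [Finset.mem_map]
            refine ⟨(u i, v i), ?_, Prod.ext hu.symm hv.symm⟩
            rw [Finset.HasAntidiagonal.mem_antidiagonal]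
            have : (u + v) i = d i := by rw [huv]
            simpa using this
          · rw [if_neg hv, mul_zero]
        · rw [if_neg hu, zero_mul]
    · rw [if_neg hd, Finset.sum_eq_zero]
      rintro ⟨u, v⟩ huv
      rw [Finset.HasAntidiagonal.mem_antidiagonal] at huv
      rw [ih, coeff_substPS_X]
      by_cases hu : u = Finsupp.single i (u i)
      · by_cases hv : v = Finsupp.single i (v i)
        · exfalso
          apply hd
          have hdv : d = Finsupp.single i (u i + v i) := by
            rw [Finsupp.single_add, ← hu, ← hv]
            exact huv.symm
          rw [hdv, Finsupp.single_eq_same]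
        · rw [if_neg hv, mul_zero]
      · rw [if_neg hu, zero_mul]

set_option maxHeartbeats 1000000 in
lemma coeff_subst2_psi (G : MvPowerSeries (Fin 2) A) (φ : PowerSeries A) (i j : ℕ) :
    MvPowerSeries.coeff (mon2 i j)
        (subst2 G (substPS φ (MvPowerSeries.X 0)) (substPS φ (MvPowerSeries.X 1))) =
      ∑ e ∈ range (i + j + 1) ×ˢ range (i + j + 1),
        MvPowerSeries.coeff (mon2 e.1 e.2) G *
          (PowerSeries.coeff i (φ ^ e.1) * PowerSeries.coeff j (φ ^ e.2)) := by
  rw [coeff_subst2, deg_mon2]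
  refine Finset.sum_congr rfl fun e _ => ?_
  congr 1
  rw [MvPowerSeries.coeff_mul, Finset.sum_eq_single (Finsupp.single 0 i, Finsupp.single 1 j)]
  · rw [coeff_pow_substPS_X, coeff_pow_substPS_X, Finsupp.single_eq_same,
      Finsupp.single_eq_same, if_pos rfl, if_pos rfl]
  · rintro ⟨u, v⟩ huv hne
    rw [Finset.HasAntidiagonal.mem_antidiagonal] at huv
    rw [coeff_pow_substPS_X, coeff_pow_substPS_X]
    by_cases hu : u = Finsupp.single 0 (u 0)
    · by_cases hv : v = Finsupp.single 1 (v 1)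
      · exfalso
        apply hne
        have h0 : u 0 + v 0 = i := by
          have : (u + v) 0 = mon2 i j 0 := by rw [huv]
          simpa [mon2, Finsupp.single_apply] using this
        have h1 : u 1 + v 1 = j := by
          have : (u + v) 1 = mon2 i j 1 := by rw [huv]
          simpa [mon2, Finsupp.single_apply] using this
        have hv0 : v 0 = 0 := by rw [hv]; simp [Finsupp.single_apply]
        have hu1 : u 1 = 0 := by rw [hu]; simp [Finsupp.single_apply]
        have hui : u 0 = i := by omega
        have hvj : v 1 = j := by omega
        rw [Prod.mk.injEq]
        constructor
        · rw [hu, hui]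
        · rw [hv, hvj]
      · rw [if_neg hv, mul_zero]
    · rw [if_neg hu, zero_mul]
  · intro hmem
    exact absurd (Finset.HasAntidiagonal.mem_antidiagonal.mpr (by rw [mon2])) hmem


set_option maxHeartbeats 1000000 in
lemma subst2_psi_inj {G G' : MvPowerSeries (Fin 2) A} {φ : PowerSeries A}
    (h0 : PowerSeries.constantCoeff φ = 0) (hu : IsUnit (PowerSeries.coeff 1 φ))
    (h : subst2 G (substPS φ (MvPowerSeries.X 0)) (substPS φ (MvPowerSeries.X 1)) =
      (subst2 G' (substPS φ (MvPowerSeries.X 0)) (substPS φ (MvPowerSeries.X 1)) :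
        MvPowerSeries (Fin 2) A)) :
    G = G' := by
  have key : ∀ n : ℕ, ∀ i j, i + j = n →
      MvPowerSeries.coeff (mon2 i j) G = MvPowerSeries.coeff (mon2 i j) G' := by
    intro n
    induction n using Nat.strong_induction_on with
    | _ n ih =>
      intro i j hij
      have hcoeff : MvPowerSeries.coeff (mon2 i j)
            (subst2 G (substPS φ (MvPowerSeries.X 0)) (substPS φ (MvPowerSeries.X 1))) =
          MvPowerSeries.coeff (mon2 i j)
            (subst2 G' (substPS φ (MvPowerSeries.X 0)) (substPS φ (MvPowerSeries.X 1))) := by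
        rw [h]
      rw [coeff_subst2_psi, coeff_subst2_psi] at hcoeff
      have hmem : (i, j) ∈ range (i + j + 1) ×ˢ range (i + j + 1) := by
        simp only [Finset.mem_product, Finset.mem_range]
        omega
      rw [← Finset.add_sum_erase _ _ hmem, ← Finset.add_sum_erase _ _ hmem] at hcoeff
      have herase : ∀ e ∈ (range (i + j + 1) ×ˢ range (i + j + 1)).erase (i, j),
          MvPowerSeries.coeff (mon2 e.1 e.2) G *
            (PowerSeries.coeff i (φ ^ e.1) * PowerSeries.coeff j (φ ^ e.2)) =
          MvPowerSeries.coeff (mon2 e.1 e.2) G' *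
            (PowerSeries.coeff i (φ ^ e.1) * PowerSeries.coeff j (φ ^ e.2)) := by
        rintro ⟨a, b⟩ he
        rcases lt_or_ge i a with hlt | hle
        · rw [coeff_pow_lt h0 hlt, zero_mul, mul_zero, mul_zero]
        rcases lt_or_ge j b with hlt | hble
        · rw [coeff_pow_lt h0 hlt, mul_zero, mul_zero, mul_zero]
        have hne : (a, b) ≠ (i, j) := (Finset.mem_erase.mp he).1
        have hor : a ≠ i ∨ b ≠ j := by
          by_contra hc
          push_neg at hc
          exact hne (Prod.ext hc.1 hc.2)
        have hlt2 : a + b < n := by omega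
        rw [ih (a + b) hlt2 a b rfl]
      rw [Finset.sum_congr rfl herase] at hcoeff
      have hcancel := add_right_cancel hcoeff
      rw [coeff_pow_self h0, coeff_pow_self h0] at hcancel
      exact ((hu.pow i).mul (hu.pow j)).mul_right_cancel hcancel
  ext d
  rw [fin2_eq_mon2 d]
  exact key _ _ _ rfl

end FGL



open FGL

/-- The ring `W = L[a₀, a₁, a₂, …][a₀⁻¹]`: the polynomial ring over `L` on countably
many generators `a₀, a₁, a₂, …` (indexed by `some i`), with an inverse for `a₀`
adjoined (indexed by `none`). -/
abbrev Wring (L : Type) [CommRing L] : Type :=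
  MvPolynomial (Option ℕ) L ⧸
    (Ideal.span ({MvPolynomial.X none * MvPolynomial.X (some 0) - 1} :
      Set (MvPolynomial (Option ℕ) L)))

/-- The generator `aᵢ` of `W`. -/
noncomputable def aGen (L : Type) [CommRing L] (i : ℕ) : Wring L :=
  Ideal.Quotient.mk _ (MvPolynomial.X (some i))

/-- The left unit `η_L : L → W`. -/
noncomputable def etaL (L : Type) [CommRing L] : L →+* Wring L :=
  (Ideal.Quotient.mk _).comp MvPolynomial.C

/-- The universal invertible power series `φ_u(x) = Σ_{i ≥ 0} aᵢ x^{i+1}` over `W`. -/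
noncomputable def phiU (L : Type) [CommRing L] : PowerSeries (Wring L) :=
  PowerSeries.mk fun n => if n = 0 then 0 else aGen L (n - 1)

open TensorProduct

section Pushout

variable (L A₁ A₂ : Type) [CommRing L] [CommRing A₁] [CommRing A₂]

/-- The underlying tensor product `(A₁ ⊗_ℤ W) ⊗_ℤ A₂`. -/
abbrev T0 : Type := (A₁ ⊗[ℤ] Wring L) ⊗[ℤ] A₂

noncomputable instance : CommRing (T0 L A₁ A₂) :=
  @Algebra.TensorProduct.instCommRing ℤ (A₁ ⊗[ℤ] Wring L) A₂ _ _ Algebra.TensorProduct.leftAlgebra _ _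

/-- Inclusion of `A₁` into `(A₁ ⊗_ℤ W) ⊗_ℤ A₂`. -/
noncomputable def j1 : A₁ →+* T0 L A₁ A₂ :=
  Algebra.TensorProduct.includeLeftRingHom.comp Algebra.TensorProduct.includeLeftRingHom

/-- Inclusion of `W` into `(A₁ ⊗_ℤ W) ⊗_ℤ A₂`. -/
noncomputable def jW : Wring L →+* T0 L A₁ A₂ :=
  Algebra.TensorProduct.includeLeftRingHom.comp Algebra.TensorProduct.includeRight.toRingHom

/-- Inclusion of `A₂` into `(A₁ ⊗_ℤ W) ⊗_ℤ A₂`. -/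
noncomputable def j2 : A₂ →+* T0 L A₁ A₂ :=
  (Algebra.TensorProduct.includeRight (R := ℤ) (A := A₁ ⊗[ℤ] Wring L) (B := A₂)).toRingHom

variable (lam1 : L →+* A₁) (lam2 : L →+* A₂) (etaR : L →+* Wring L)

/-- The ideal of relations identifying the two `L`-algebra structures, so that the
quotient is `A₁ ⊗_{λ₁, L, η_L} W ⊗_{η_R, L, λ₂} A₂`. -/
noncomputable def relIdeal : Ideal (T0 L A₁ A₂) :=
  Ideal.span
    ({x | ∃ l, x = j1 L A₁ A₂ (lam1 l) - jW L A₁ A₂ (etaL L l)} ∪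
     {x | ∃ l, x = j2 L A₁ A₂ (lam2 l) - jW L A₁ A₂ (etaR l)})

/-- The two-sided tensor product `A₁ ⊗_{λ₁, L, η_L} W ⊗_{η_R, L, λ₂} A₂`. -/
abbrev Tring : Type := T0 L A₁ A₂ ⧸ relIdeal L A₁ A₂ lam1 lam2 etaR

/-- The canonical map `A₁ → A₁ ⊗_L W ⊗_L A₂`. -/
noncomputable def iota1 : A₁ →+* Tring L A₁ A₂ lam1 lam2 etaR :=
  (Ideal.Quotient.mk _).comp (j1 L A₁ A₂)

/-- The canonical map `W → A₁ ⊗_L W ⊗_L A₂`. -/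
noncomputable def iotaW : Wring L →+* Tring L A₁ A₂ lam1 lam2 etaR :=
  (Ideal.Quotient.mk _).comp (jW L A₁ A₂)

/-- The canonical map `A₂ → A₁ ⊗_L W ⊗_L A₂`. -/
noncomputable def iota2 : A₂ →+* Tring L A₁ A₂ lam1 lam2 etaR :=
  (Ideal.Quotient.mk _).comp (j2 L A₁ A₂)

end Pushout

set_option synthInstance.maxHeartbeats 1000000
set_option maxHeartbeats 1000000

section Plumbing

variable (L A₁ A₂ : Type) [CommRing L] [CommRing A₁] [CommRing A₂]
variable (lam1 : L →+* A₁) (lam2 : L →+* A₂) (etaR : L →+* Wring L)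

lemma iota1_lam1 :
    (iota1 L A₁ A₂ lam1 lam2 etaR).comp lam1 = (iotaW L A₁ A₂ lam1 lam2 etaR).comp (etaL L) := by
  ext l
  simp only [RingHom.comp_apply, iota1, iotaW]
  rw [Ideal.Quotient.eq]
  exact Ideal.subset_span (Or.inl ⟨l, rfl⟩)

lemma iota2_lam2 :
    (iota2 L A₁ A₂ lam1 lam2 etaR).comp lam2 = (iotaW L A₁ A₂ lam1 lam2 etaR).comp etaR := by
  ext l
  simp only [RingHom.comp_apply, iota2, iotaW]
  rw [Ideal.Quotient.eq]
  exact Ideal.subset_span (Or.inr ⟨l, rfl⟩)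

variable {R : Type} [CommRing R]

lemma coeff_map_phiU (h : Wring L →+* R) (i : ℕ) :
    PowerSeries.coeff (i + 1) (PowerSeries.map h (phiU L)) = h (aGen L i) := by
  rw [PowerSeries.coeff_map, phiU, PowerSeries.coeff_mk]
  simp

lemma aGenZero_mul (h : Wring L →+* R) :
    h (Ideal.Quotient.mk _ (MvPolynomial.X none)) * h (aGen L 0) = 1 := by
  rw [aGen, ← map_mul, ← map_mul]
  have hrel : (Ideal.Quotient.mk
      (Ideal.span ({MvPolynomial.X none * MvPolynomial.X (some 0) - 1} :
        Set (MvPolynomial (Option ℕ) L)))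
      (MvPolynomial.X none * MvPolynomial.X (some 0) - 1)) = 0 :=
    Ideal.Quotient.eq_zero_iff_mem.mpr (Ideal.subset_span rfl)
  rw [map_sub, sub_eq_zero, map_one] at hrel
  rw [hrel, map_one]

lemma Wring_hom_ext (h h' : Wring L →+* R)
    (hC : h.comp (etaL L) = h'.comp (etaL L))
    (ha : ∀ i, h (aGen L i) = h' (aGen L i)) : h = h' := by
  have hmk : h.comp (Ideal.Quotient.mk _) = h'.comp (Ideal.Quotient.mk _) := by
    apply MvPolynomial.ringHom_ext
    · intro r
      exact RingHom.congr_fun hC r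
    · intro o
      cases o with
      | some i => exact ha i
      | none =>
        simp only [RingHom.comp_apply]
        have e1 := aGenZero_mul L h
        have e2 := aGenZero_mul L h'
        calc h (Ideal.Quotient.mk _ (MvPolynomial.X none))
            = h (Ideal.Quotient.mk _ (MvPolynomial.X none)) *
              (h' (Ideal.Quotient.mk _ (MvPolynomial.X none)) * h' (aGen L 0)) := by
              rw [e2, mul_one]
          _ = h' (Ideal.Quotient.mk _ (MvPolynomial.X none)) *
              (h (Ideal.Quotient.mk _ (MvPolynomial.X none)) * h (aGen L 0)) := by
              rw [ha 0]; ring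
          _ = h' (Ideal.Quotient.mk _ (MvPolynomial.X none)) := by rw [e1, mul_one]
  refine RingHom.ext fun x => ?_
  obtain ⟨y, rfl⟩ := Ideal.Quotient.mk_surjective
    (I := (Ideal.span ({MvPolynomial.X none * MvPolynomial.X (some 0) - 1} :
      Set (MvPolynomial (Option ℕ) L)))) x
  exact RingHom.congr_fun hmk y

lemma T0_hom_ext (h h' : T0 L A₁ A₂ →+* R)
    (e1 : h.comp (j1 L A₁ A₂) = h'.comp (j1 L A₁ A₂))
    (eW : h.comp (jW L A₁ A₂) = h'.comp (jW L A₁ A₂))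
    (e2 : h.comp (j2 L A₁ A₂) = h'.comp (j2 L A₁ A₂)) : h = h' := by
  refine RingHom.ext fun x => ?_
  induction x using TensorProduct.induction_on with
  | zero => rw [map_zero, map_zero]
  | add a b ha hb => rw [map_add, map_add, ha, hb]
  | tmul y b =>
    induction y using TensorProduct.induction_on with
    | zero => rw [TensorProduct.zero_tmul, map_zero, map_zero]
    | add u v hu hv => rw [TensorProduct.add_tmul, map_add, map_add, hu, hv]
    | tmul a w =>
      have hx : (a ⊗ₜ[ℤ] w) ⊗ₜ[ℤ] b =
          j1 L A₁ A₂ a * jW L A₁ A₂ w * j2 L A₁ A₂ b := by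
        have : ((a ⊗ₜ[ℤ] (1 : Wring L)) ⊗ₜ[ℤ] (1 : A₂)) * (((1 : A₁) ⊗ₜ[ℤ] w) ⊗ₜ[ℤ] (1 : A₂)) *
            (((1 : A₁) ⊗ₜ[ℤ] (1 : Wring L)) ⊗ₜ[ℤ] b) = (a ⊗ₜ[ℤ] w) ⊗ₜ[ℤ] b := by
          erw [Algebra.TensorProduct.tmul_mul_tmul, Algebra.TensorProduct.tmul_mul_tmul]
          simp only [Algebra.TensorProduct.tmul_mul_tmul, one_mul, mul_one]
          rfl
        exact this.symm
      have c1 := RingHom.congr_fun e1 a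
      have cW := RingHom.congr_fun eW w
      have c2 := RingHom.congr_fun e2 b
      simp only [RingHom.comp_apply] at c1 cW c2
      rw [hx, map_mul, map_mul, map_mul, map_mul, c1, cW, c2]

lemma Tring_hom_ext (h h' : Tring L A₁ A₂ lam1 lam2 etaR →+* R)
    (e1 : h.comp (iota1 L A₁ A₂ lam1 lam2 etaR) = h'.comp (iota1 L A₁ A₂ lam1 lam2 etaR))
    (eW : h.comp (iotaW L A₁ A₂ lam1 lam2 etaR) = h'.comp (iotaW L A₁ A₂ lam1 lam2 etaR))
    (e2 : h.comp (iota2 L A₁ A₂ lam1 lam2 etaR) = h'.comp (iota2 L A₁ A₂ lam1 lam2 etaR)) :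
    h = h' := by
  have hmk : h.comp (Ideal.Quotient.mk _) = h'.comp (Ideal.Quotient.mk _) := by
    apply T0_hom_ext
    · exact e1
    · exact eW
    · exact e2
  refine RingHom.ext fun x => ?_
  obtain ⟨y, rfl⟩ := Ideal.Quotient.mk_surjective
    (I := relIdeal L A₁ A₂ lam1 lam2 etaR) x
  exact RingHom.congr_fun hmk y

end Plumbing

/-- **Strickland's observation.** For formal group laws `F₁, F₂` over `A₁, A₂` with
classifying maps `λ₁, λ₂`, the functor sending a commutative ring `R` to the set of
triples `(f₁, f₂, φ)` — ring homomorphisms `fᵢ : Aᵢ → R` together with an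
isomorphism `φ : (f₁)_*F₁ → (f₂)_*F₂` — is represented by `A₁ ⊗_L W ⊗_L A₂`, the
(natural-in-`R`) bijection being given by composition with the canonical maps. -/
theorem pullback_of_formal_group_laws_is_affine
    (L : Type) [CommRing L] (Fu : MvPowerSeries (Fin 2) L) (hFu : IsFGL Fu)
    (huniv : ∀ (A : Type) [CommRing A] (F : MvPowerSeries (Fin 2) A), IsFGL F →
      ∃! g : L →+* A, MvPowerSeries.map g Fu = F)
    -- `G_W` and the right unit `η_R : L → W` classifying it
    (GW : MvPowerSeries (Fin 2) (Wring L)) (hGW : IsFGL GW)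
    (hphi : IsIso (MvPowerSeries.map (etaL L) Fu) GW (phiU L))
    (etaR : L →+* Wring L) (hetaR : MvPowerSeries.map etaR Fu = GW)
    -- the two formal group laws and their classifying maps
    (A₁ A₂ : Type) [CommRing A₁] [CommRing A₂]
    (F₁ : MvPowerSeries (Fin 2) A₁) (F₂ : MvPowerSeries (Fin 2) A₂)
    (hF₁ : IsFGL F₁) (hF₂ : IsFGL F₂)
    (lam1 : L →+* A₁) (lam2 : L →+* A₂)
    (hlam1 : MvPowerSeries.map lam1 Fu = F₁)
    (hlam2 : MvPowerSeries.map lam2 Fu = F₂) :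
    ∀ (R : Type) [CommRing R],
      (∀ k : Tring L A₁ A₂ lam1 lam2 etaR →+* R,
        IsIso (MvPowerSeries.map (k.comp (iota1 L A₁ A₂ lam1 lam2 etaR)) F₁)
          (MvPowerSeries.map (k.comp (iota2 L A₁ A₂ lam1 lam2 etaR)) F₂)
          (PowerSeries.map (k.comp (iotaW L A₁ A₂ lam1 lam2 etaR)) (phiU L))) ∧
      ∀ (f₁ : A₁ →+* R) (f₂ : A₂ →+* R) (φ : PowerSeries R),
        IsIso (MvPowerSeries.map f₁ F₁) (MvPowerSeries.map f₂ F₂) φ →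
          ∃! k : Tring L A₁ A₂ lam1 lam2 etaR →+* R,
            k.comp (iota1 L A₁ A₂ lam1 lam2 etaR) = f₁ ∧
            k.comp (iota2 L A₁ A₂ lam1 lam2 etaR) = f₂ ∧
            PowerSeries.map (k.comp (iotaW L A₁ A₂ lam1 lam2 etaR)) (phiU L) = φ := by
  intro R _
  have hrel1 := iota1_lam1 L A₁ A₂ lam1 lam2 etaR
  have hrel2 := iota2_lam2 L A₁ A₂ lam1 lam2 etaR
  constructor
  · -- every ring hom from the tensor product gives an isomorphism
    intro k
    have hIso := hphi.map (k.comp (iotaW L A₁ A₂ lam1 lam2 etaR))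
    rw [mv_map_map] at hIso
    have hA : (k.comp (iotaW L A₁ A₂ lam1 lam2 etaR)).comp (etaL L) =
        (k.comp (iota1 L A₁ A₂ lam1 lam2 etaR)).comp lam1 := by
      refine RingHom.ext fun l => ?_
      have := RingHom.congr_fun hrel1 l
      simp only [RingHom.comp_apply] at this ⊢
      rw [← this]
    have hB : (k.comp (iotaW L A₁ A₂ lam1 lam2 etaR)).comp etaR =
        (k.comp (iota2 L A₁ A₂ lam1 lam2 etaR)).comp lam2 := by
      refine RingHom.ext fun l => ?_
      have := RingHom.congr_fun hrel2 l
      simp only [RingHom.comp_apply] at this ⊢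
      rw [← this]
    have h1 : MvPowerSeries.map
        ((k.comp (iotaW L A₁ A₂ lam1 lam2 etaR)).comp (etaL L)) Fu =
        MvPowerSeries.map (k.comp (iota1 L A₁ A₂ lam1 lam2 etaR)) F₁ := by
      rw [hA, ← mv_map_map, hlam1]
    have h2 : MvPowerSeries.map (k.comp (iotaW L A₁ A₂ lam1 lam2 etaR)) GW =
        MvPowerSeries.map (k.comp (iota2 L A₁ A₂ lam1 lam2 etaR)) F₂ := by
      rw [← hetaR, mv_map_map, hB, ← mv_map_map, hlam2]
    rw [h1, h2] at hIso
    exact hIso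
  · -- the universal property
    intro f₁ f₂ φ hIso
    obtain ⟨⟨hc0, hsub⟩, hu1⟩ := hIso
    -- construct the map on W
    set u := PowerSeries.coeff 1 φ with hu_def
    set v : Option ℕ → R := fun o => match o with
      | none => Ring.inverse u
      | some i => PowerSeries.coeff (i + 1) φ with hv_def
    set g0 : MvPolynomial (Option ℕ) L →+* R := MvPolynomial.eval₂Hom (f₁.comp lam1) v
      with hg0_def
    have hg0gen : g0 (MvPolynomial.X none * MvPolynomial.X (some 0) - 1) = 0 := by
      rw [map_sub, map_mul, map_one, hg0_def, MvPolynomial.eval₂Hom_X',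
        MvPolynomial.eval₂Hom_X']
      show Ring.inverse u * PowerSeries.coeff (0 + 1) φ - 1 = 0
      rw [zero_add, ← hu_def, Ring.inverse_mul_cancel _ hu1, sub_self]
    have hg0ker : ∀ x ∈ (Ideal.span ({MvPolynomial.X none * MvPolynomial.X (some 0) - 1} :
        Set (MvPolynomial (Option ℕ) L))), g0 x = 0 := by
      intro x hx
      rw [Ideal.mem_span_singleton] at hx
      obtain ⟨c, rfl⟩ := hx
      rw [map_mul, hg0gen, zero_mul]
    set gW : Wring L →+* R := Ideal.Quotient.lift _ g0 hg0ker with hgW_def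
    have hgWa : ∀ i, gW (aGen L i) = PowerSeries.coeff (i + 1) φ := by
      intro i
      rw [hgW_def, aGen, Ideal.Quotient.lift_mk, hg0_def, MvPolynomial.eval₂Hom_X']
    have hgWC : gW.comp (etaL L) = f₁.comp lam1 := by
      refine RingHom.ext fun l => ?_
      simp only [RingHom.comp_apply, etaL]
      rw [hgW_def, Ideal.Quotient.lift_mk, hg0_def, MvPolynomial.eval₂Hom_C,
        RingHom.comp_apply]
    have hmapphi : PowerSeries.map gW (phiU L) = φ := by
      ext n
      rw [PowerSeries.coeff_map, phiU, PowerSeries.coeff_mk]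
      cases n with
      | zero =>
        rw [if_pos rfl, map_zero, PowerSeries.coeff_zero_eq_constantCoeff_apply, hc0]
      | succ m =>
        rw [if_neg (Nat.succ_ne_zero m)]
        exact hgWa m
    -- gW classifies the pushforward correctly on the right as well
    have hGWpush : MvPowerSeries.map gW GW = MvPowerSeries.map f₂ F₂ := by
      have hH1 := hphi.1.map gW
      rw [hmapphi, mv_map_map, hgWC, ← mv_map_map, hlam1] at hH1
      exact subst2_psi_inj hc0 hu1 ((hH1.2).symm.trans hsub)
    have hgWetaR : gW.comp etaR = f₂.comp lam2 := by
      obtain ⟨g, hg, hgu⟩ := huniv R (MvPowerSeries.map f₂ F₂) (hF₂.map f₂)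
      have ha : MvPowerSeries.map (gW.comp etaR) Fu =
          MvPowerSeries.map f₂ F₂ := by
        rw [← mv_map_map, hetaR, hGWpush]
      have hb : MvPowerSeries.map (f₂.comp lam2) Fu =
          MvPowerSeries.map f₂ F₂ := by
        rw [← mv_map_map, hlam2]
      rw [hgu _ ha, hgu _ hb]
    -- construct k
    set k0 : T0 L A₁ A₂ →+* R :=
      (Algebra.TensorProduct.productMap
        (Algebra.TensorProduct.productMap f₁.toIntAlgHom gW.toIntAlgHom)
        f₂.toIntAlgHom).toRingHom with hk0_def
    have hk0j1 : ∀ a, k0 (j1 L A₁ A₂ a) = f₁ a := by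
      intro a
      change (Algebra.TensorProduct.productMap
          (Algebra.TensorProduct.productMap f₁.toIntAlgHom gW.toIntAlgHom)
          f₂.toIntAlgHom) ((a ⊗ₜ[ℤ] (1 : Wring L)) ⊗ₜ[ℤ] (1 : A₂)) = f₁ a
      simp
    have hk0jW : ∀ w, k0 (jW L A₁ A₂ w) = gW w := by
      intro w
      change (Algebra.TensorProduct.productMap
          (Algebra.TensorProduct.productMap f₁.toIntAlgHom gW.toIntAlgHom)
          f₂.toIntAlgHom) (((1 : A₁) ⊗ₜ[ℤ] w) ⊗ₜ[ℤ] (1 : A₂)) = gW w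
      simp
    have hk0j2 : ∀ b, k0 (j2 L A₁ A₂ b) = f₂ b := by
      intro b
      change (Algebra.TensorProduct.productMap
          (Algebra.TensorProduct.productMap f₁.toIntAlgHom gW.toIntAlgHom)
          f₂.toIntAlgHom) (((1 : A₁) ⊗ₜ[ℤ] (1 : Wring L)) ⊗ₜ[ℤ] b) = f₂ b
      simp
    have hker : ∀ x ∈ relIdeal L A₁ A₂ lam1 lam2 etaR, k0 x = 0 := by
      have hle : relIdeal L A₁ A₂ lam1 lam2 etaR ≤ RingHom.ker k0 := by
        rw [relIdeal, Ideal.span_le]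
        rintro y (⟨l, rfl⟩ | ⟨l, rfl⟩)
        · rw [SetLike.mem_coe, RingHom.mem_ker, map_sub, hk0j1, hk0jW]
          have hC := RingHom.congr_fun hgWC l
          simp only [RingHom.comp_apply] at hC
          rw [hC, sub_self]
        · rw [SetLike.mem_coe, RingHom.mem_ker, map_sub, hk0j2, hk0jW]
          have hC := RingHom.congr_fun hgWetaR l
          simp only [RingHom.comp_apply] at hC
          rw [hC, sub_self]
      intro x hx
      exact RingHom.mem_ker.mp (hle hx)
    set k : Tring L A₁ A₂ lam1 lam2 etaR →+* R := Ideal.Quotient.lift _ k0 hker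
      with hk_def
    have hk1 : k.comp (iota1 L A₁ A₂ lam1 lam2 etaR) = f₁ := by
      refine RingHom.ext fun a => ?_
      simp only [RingHom.comp_apply, iota1]
      rw [hk_def, Ideal.Quotient.lift_mk]
      exact hk0j1 a
    have hk2 : k.comp (iota2 L A₁ A₂ lam1 lam2 etaR) = f₂ := by
      refine RingHom.ext fun b => ?_
      simp only [RingHom.comp_apply, iota2]
      rw [hk_def, Ideal.Quotient.lift_mk]
      exact hk0j2 b
    have hkW : k.comp (iotaW L A₁ A₂ lam1 lam2 etaR) = gW := by
      refine RingHom.ext fun w => ?_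
      simp only [RingHom.comp_apply, iotaW]
      rw [hk_def, Ideal.Quotient.lift_mk]
      exact hk0jW w
    refine ⟨k, ⟨hk1, hk2, by rw [hkW]; exact hmapphi⟩, ?_⟩
    -- uniqueness
    rintro k' ⟨u1, u2, u3⟩
    have hkW' : k'.comp (iotaW L A₁ A₂ lam1 lam2 etaR) = gW := by
      apply Wring_hom_ext
      · refine RingHom.ext fun l => ?_
        have hl := RingHom.congr_fun hrel1 l
        have hC := RingHom.congr_fun hgWC l
        simp only [RingHom.comp_apply] at hl hC ⊢
        rw [← hl, hC, ← u1, RingHom.comp_apply]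
      · intro i
        have c1 := coeff_map_phiU L (k'.comp (iotaW L A₁ A₂ lam1 lam2 etaR)) i
        rw [u3] at c1
        rw [← c1, hgWa i]
    apply Tring_hom_ext
    · rw [u1, hk1]
    · rw [hkW', hkW]
    · rw [u2, hk2]
end
end

section
/- Let F be a formal group law over a commutative ring A and let ∂₁F ∈ A⟦x,y⟧ denote the formal partial derivative of F with respect to its first variable. Then the one-variable power series (∂₁F)(0,x) has constant term 1, hence is a unit of A⟦x⟧, and for a power series f ∈ A⟦x⟧ the following are equivalent: (i) f(F(x,y))·(∂₁F)(x,y) = f(x) in A⟦x,y⟧ (the differential f(x)dx is invariant); (ii) f(x) = f(0)·((∂₁F)(0,x))⁻¹. In particular, the A-module of invariant differentials of F is free of rank 1, generated by dx/(∂₁F)(0,x). -/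
noncomputable section

open FGL
/-- The formal partial derivative `∂₁F` of a two-variable power series with respect
to its first variable: if `F = Σ c_{ij} x^i y^j` then `∂₁F = Σ i·c_{ij} x^{i-1} y^j`. -/
def dx1 {A : Type*} [CommRing A] (F : MvPowerSeries (Fin 2) A) :
    MvPowerSeries (Fin 2) A :=
  fun d => ((d 0 + 1 : ℕ) : A) * MvPowerSeries.coeff (d + Finsupp.single 0 1) F

/-- The one-variable power series `(∂₁F)(0, x)`. -/
def dx1AtZero {A : Type*} [CommRing A] (F : MvPowerSeries (Fin 2) A) :
    PowerSeries A :=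
  PowerSeries.mk fun j => MvPowerSeries.coeff (Finsupp.single 1 j) (dx1 F)

namespace FGLaux

open Finset FGL MvPowerSeries

variable {A : Type*} [CommRing A] {σ τ : Type*}

lemma deg_zero : deg (0 : σ →₀ ℕ) = 0 := by simp [deg]

lemma deg_single (i : σ) (n : ℕ) : deg (Finsupp.single i n) = n := by
  classical
  simp [deg, Finsupp.sum_single_index]

lemma deg_add (a b : σ →₀ ℕ) : deg (a + b) = deg a + deg b :=
  Finsupp.sum_add_index' (fun _ => rfl) (fun _ _ _ => rfl)

lemma deg_eq_zero {d : σ →₀ ℕ} (h : deg d = 0) : d = 0 := by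
  ext v
  rcases eq_or_ne (d v) 0 with h0 | h0
  · simp [h0]
  · exact absurd ((Finset.sum_eq_zero_iff.mp h) v (Finsupp.mem_support_iff.2 h0)) h0

lemma coeff_pow_eq_zero {P : MvPowerSeries σ A} (hP : MvPowerSeries.constantCoeff P = 0) :
    ∀ {n : ℕ} {d : σ →₀ ℕ}, deg d < n → MvPowerSeries.coeff d (P ^ n) = 0 := by
  classical
  intro n
  induction n with
  | zero => exact fun h => absurd h (Nat.not_lt_zero _)
  | succ n ih =>
    intro d h
    rw [pow_succ', MvPowerSeries.coeff_mul]
    apply Finset.sum_eq_zero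
    intro p hp
    rw [Finset.HasAntidiagonal.mem_antidiagonal] at hp
    rcases eq_or_ne p.1 0 with h0 | ha
    · rw [h0]
      simp only [coeff_zero_eq_constantCoeff_apply, hP, zero_mul]
    · have h1 : 1 ≤ deg p.1 := by
        rcases Nat.eq_zero_or_pos (deg p.1) with h0 | h0
        · exact absurd (deg_eq_zero h0) ha
        · exact h0
      have h2 : deg p.1 + deg p.2 = deg d := by rw [← deg_add, hp]
      rw [ih (by omega), mul_zero]

lemma coeff_pow_mul_pow_eq_zero {P Q : MvPowerSeries σ A}
    (hP : MvPowerSeries.constantCoeff P = 0) (hQ : MvPowerSeries.constantCoeff Q = 0)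
    {d : σ →₀ ℕ} {i j : ℕ} (h : deg d < i + j) :
    MvPowerSeries.coeff d (P ^ i * Q ^ j) = 0 := by
  classical
  rw [MvPowerSeries.coeff_mul]
  apply Finset.sum_eq_zero
  intro p hp
  rw [Finset.HasAntidiagonal.mem_antidiagonal] at hp
  have h2 : deg p.1 + deg p.2 = deg d := by rw [← deg_add, hp]
  rcases lt_or_ge (deg p.1) i with h1 | h1
  · rw [coeff_pow_eq_zero hP h1, zero_mul]
  · rw [coeff_pow_eq_zero hQ (show deg p.2 < j by omega), mul_zero]

lemma coeff_substPS_def (f : PowerSeries A) (P : MvPowerSeries τ A) (d : τ →₀ ℕ) :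
    MvPowerSeries.coeff d (substPS f P) =
      ∑ n ∈ range (deg d + 1), PowerSeries.coeff n f * MvPowerSeries.coeff d (P ^ n) := rfl

lemma coeff_subst2_def (F : MvPowerSeries (Fin 2) A) (g h : MvPowerSeries τ A) (d : τ →₀ ℕ) :
    MvPowerSeries.coeff d (subst2 F g h) =
      ∑ p ∈ range (deg d + 1) ×ˢ range (deg d + 1),
        MvPowerSeries.coeff (mon2 p.1 p.2) F *
          MvPowerSeries.coeff d (g ^ p.1 * h ^ p.2) := rfl

lemma coeff_substPS {f : PowerSeries A} {P : MvPowerSeries τ A}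
    (hP : MvPowerSeries.constantCoeff P = 0) (d : τ →₀ ℕ) {N : ℕ} (hN : deg d < N) :
    MvPowerSeries.coeff d (substPS f P) =
      ∑ n ∈ range N, PowerSeries.coeff n f * MvPowerSeries.coeff d (P ^ n) := by
  rw [coeff_substPS_def]
  apply Finset.sum_subset
  · exact Finset.range_subset_range.2 (by omega)
  · intro n hn hn'
    rw [Finset.mem_range] at hn'
    rw [coeff_pow_eq_zero hP (by omega), mul_zero]

lemma coeff_subst2 {F : MvPowerSeries (Fin 2) A} {g h : MvPowerSeries τ A}
    (hg : MvPowerSeries.constantCoeff g = 0) (hh : MvPowerSeries.constantCoeff h = 0)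
    (d : τ →₀ ℕ) {N M : ℕ} (hN : deg d < N) (hM : deg d < M) :
    MvPowerSeries.coeff d (subst2 F g h) =
      ∑ p ∈ range N ×ˢ range M,
        MvPowerSeries.coeff (mon2 p.1 p.2) F *
          MvPowerSeries.coeff d (g ^ p.1 * h ^ p.2) := by
  rw [coeff_subst2_def]
  apply Finset.sum_subset
  · intro p hp
    rw [Finset.mem_product, Finset.mem_range, Finset.mem_range] at hp ⊢
    omega
  · rintro ⟨i, j⟩ hp hp'
    rw [Finset.mem_product, Finset.mem_range, Finset.mem_range] at hp hp'
    rw [coeff_pow_mul_pow_eq_zero hg hh (by omega), mul_zero]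

end FGLaux
namespace FGLaux

variable {A : Type*} [CommRing A] {σ τ : Type*}
open Finset FGL MvPowerSeries

/-- Slice of a power series along an injection of variable sets: substitute `X_{u t}` for
`X t` and `0` for all variables not in the range of `u`. -/
def sl (u : τ → σ) (P : MvPowerSeries σ A) : MvPowerSeries τ A :=
  fun d => P (Finsupp.mapDomain u d)

lemma coeff_sl (u : τ → σ) (P : MvPowerSeries σ A) (d : τ →₀ ℕ) :
    MvPowerSeries.coeff d (sl u P) = MvPowerSeries.coeff (Finsupp.mapDomain u d) P := rfl

lemma deg_mapDomain (u : τ → σ) (d : τ →₀ ℕ) : deg (Finsupp.mapDomain u d) = deg d := by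
  classical
  exact Finsupp.sum_mapDomain_index (fun _ => rfl) (fun _ _ _ => rfl)

lemma exists_mapDomain_eq {u : τ → σ} (hu : Function.Injective u) {a : σ →₀ ℕ}
    (ha : ∀ v, v ∉ Set.range u → a v = 0) : ∃ a', Finsupp.mapDomain u a' = a := by
  refine ⟨Finsupp.comapDomain u a hu.injOn, Finsupp.mapDomain_comapDomain u hu a ?_⟩
  intro v hv
  by_contra hr
  exact (Finsupp.mem_support_iff.mp hv) (ha v hr)

lemma sum_antidiagonal_mapDomain [DecidableEq σ] [DecidableEq τ] {u : τ → σ} (hu : Function.Injective u) (d : τ →₀ ℕ)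
    (f : (σ →₀ ℕ) × (σ →₀ ℕ) → A) :
    ∑ p ∈ antidiagonal (Finsupp.mapDomain u d), f p
      = ∑ p ∈ antidiagonal d, f (Finsupp.mapDomain u p.1, Finsupp.mapDomain u p.2) := by
  symm
  apply Finset.sum_bij
    (i := fun p _ => (Finsupp.mapDomain u p.1, Finsupp.mapDomain u p.2))
  · intro p hp
    rw [Finset.HasAntidiagonal.mem_antidiagonal] at hp ⊢
    rw [← Finsupp.mapDomain_add, hp]
  · intro p hp q hq hpq
    rw [Prod.mk.injEq] at hpq
    exact Prod.ext (Finsupp.mapDomain_injective hu hpq.1) (Finsupp.mapDomain_injective hu hpq.2)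
  · intro p hp
    rw [Finset.HasAntidiagonal.mem_antidiagonal] at hp
    have hva : ∀ v, v ∉ Set.range u → p.1 v = 0 := by
      intro v hv
      have h1 : p.1 v + p.2 v = Finsupp.mapDomain u d v := by
        rw [← hp]; rfl
      rw [Finsupp.mapDomain_notin_range _ _ hv] at h1
      omega
    have hvb : ∀ v, v ∉ Set.range u → p.2 v = 0 := by
      intro v hv
      have h1 : p.1 v + p.2 v = Finsupp.mapDomain u d v := by
        rw [← hp]; rfl
      rw [Finsupp.mapDomain_notin_range _ _ hv] at h1
      omega
    obtain ⟨a', ha'⟩ := exists_mapDomain_eq hu hva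
    obtain ⟨b', hb'⟩ := exists_mapDomain_eq hu hvb
    refine ⟨(a', b'), ?_, by simp [ha', hb']⟩
    rw [Finset.HasAntidiagonal.mem_antidiagonal]
    apply Finsupp.mapDomain_injective hu
    rw [Finsupp.mapDomain_add, ha', hb', hp]
  · intros; rfl

lemma sl_mul {u : τ → σ} (hu : Function.Injective u) (P Q : MvPowerSeries σ A) :
    sl u (P * Q) = sl u P * sl u Q := by
  classical
  apply MvPowerSeries.ext; intro d
  rw [coeff_sl, MvPowerSeries.coeff_mul, MvPowerSeries.coeff_mul,
    sum_antidiagonal_mapDomain hu]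
  rfl

lemma sl_one {u : τ → σ} (hu : Function.Injective u) : sl u (1 : MvPowerSeries σ A) = 1 := by
  classical
  apply MvPowerSeries.ext; intro d
  rw [coeff_sl, MvPowerSeries.coeff_one, MvPowerSeries.coeff_one]
  by_cases h : d = 0
  · subst h; simp [Finsupp.mapDomain_zero]
  · rw [if_neg h, if_neg]
    intro h0
    exact h (Finsupp.mapDomain_injective hu (by rw [h0, Finsupp.mapDomain_zero]))

lemma sl_pow {u : τ → σ} (hu : Function.Injective u) (P : MvPowerSeries σ A) (n : ℕ) :
    sl u (P ^ n) = sl u P ^ n := by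
  induction n with
  | zero => simpa using sl_one hu
  | succ n ih => rw [pow_succ, pow_succ, sl_mul hu, ih]

lemma sl_substPS {u : τ → σ} (hu : Function.Injective u) (f : PowerSeries A)
    (P : MvPowerSeries σ A) : sl u (substPS f P) = substPS f (sl u P) := by
  apply MvPowerSeries.ext; intro d
  rw [coeff_sl, coeff_substPS_def, coeff_substPS_def, deg_mapDomain]
  refine Finset.sum_congr rfl fun n _ => ?_
  rw [← sl_pow hu, coeff_sl]

lemma sl_subst2 {u : τ → σ} (hu : Function.Injective u) (F : MvPowerSeries (Fin 2) A)
    (P Q : MvPowerSeries σ A) : sl u (subst2 F P Q) = subst2 F (sl u P) (sl u Q) := by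
  apply MvPowerSeries.ext; intro d
  rw [coeff_sl, coeff_subst2_def, coeff_subst2_def, deg_mapDomain]
  refine Finset.sum_congr rfl fun p _ => ?_
  rw [← sl_pow hu, ← sl_pow hu, ← sl_mul hu, coeff_sl]

lemma constantCoeff_sl (u : τ → σ) (P : MvPowerSeries σ A) :
    MvPowerSeries.constantCoeff (sl u P) = MvPowerSeries.constantCoeff P := by
  rw [← coeff_zero_eq_constantCoeff_apply, ← coeff_zero_eq_constantCoeff_apply, coeff_sl,
    Finsupp.mapDomain_zero]

lemma sl_X_mem {u : τ → σ} (hu : Function.Injective u) (t : τ) :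
    sl u (MvPowerSeries.X (u t) : MvPowerSeries σ A) = MvPowerSeries.X t := by
  classical
  apply MvPowerSeries.ext; intro d
  rw [coeff_sl, ← pow_one (MvPowerSeries.X (u t)), ← pow_one (MvPowerSeries.X t),
    MvPowerSeries.coeff_X_pow, MvPowerSeries.coeff_X_pow]
  by_cases h : d = Finsupp.single t 1
  · subst h
    rw [if_pos rfl, if_pos]
    rw [Finsupp.mapDomain_single]
  · rw [if_neg h, if_neg]
    intro h0
    apply h
    apply Finsupp.mapDomain_injective hu
    rw [h0, Finsupp.mapDomain_single]

lemma sl_X_not_mem {u : τ → σ} {s : σ} (hs : s ∉ Set.range u) :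
    sl u (MvPowerSeries.X s : MvPowerSeries σ A) = 0 := by
  classical
  apply MvPowerSeries.ext; intro d
  rw [coeff_sl, ← pow_one (MvPowerSeries.X s), MvPowerSeries.coeff_X_pow, map_zero, if_neg]
  intro h0
  have h1 : Finsupp.mapDomain u d s = 0 := Finsupp.mapDomain_notin_range _ _ hs
  rw [h0, Finsupp.single_eq_same] at h1
  exact one_ne_zero h1

end FGLaux
namespace FGLaux

variable {A : Type*} [CommRing A] {σ τ : Type*}
open Finset FGL MvPowerSeries

/-- The `X_{v₀}`-coefficient slice: `dsl v₀ u P` picks, for each exponent `d` in the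
`τ`-variables, the coefficient of `X_{v₀} * X^{u(d)}` in `P`. -/
def dsl (v₀ : σ) (u : τ → σ) (P : MvPowerSeries σ A) : MvPowerSeries τ A :=
  fun d => P (Finsupp.single v₀ 1 + Finsupp.mapDomain u d)

lemma coeff_dsl (v₀ : σ) (u : τ → σ) (P : MvPowerSeries σ A) (d : τ →₀ ℕ) :
    MvPowerSeries.coeff d (dsl v₀ u P) =
      MvPowerSeries.coeff (Finsupp.single v₀ 1 + Finsupp.mapDomain u d) P := rfl

lemma dsl_one (v₀ : σ) (u : τ → σ) : dsl v₀ u (1 : MvPowerSeries σ A) = 0 := by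
  classical
  apply MvPowerSeries.ext; intro d
  rw [coeff_dsl, MvPowerSeries.coeff_one, map_zero, if_neg]
  intro h0
  have h1 := congrArg (fun m : σ →₀ ℕ => m v₀) h0
  simp [Finsupp.single_eq_same] at h1

lemma dsl_X_self {u : τ → σ} (hu : Function.Injective u) {v₀ : σ} (_hv : v₀ ∉ Set.range u) :
    dsl v₀ u (MvPowerSeries.X v₀ : MvPowerSeries σ A) = 1 := by
  classical
  apply MvPowerSeries.ext; intro d
  rw [coeff_dsl, ← pow_one (MvPowerSeries.X v₀), MvPowerSeries.coeff_X_pow,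
    MvPowerSeries.coeff_one]
  by_cases h : d = 0
  · subst h; simp [Finsupp.mapDomain_zero]
  · rw [if_neg h, if_neg]
    intro h0
    apply h
    apply Finsupp.mapDomain_injective hu (a₁ := d) (a₂ := 0)
    rw [Finsupp.mapDomain_zero]
    have := add_left_cancel (a := Finsupp.single v₀ 1) (b := Finsupp.mapDomain u d) (c := 0)
    apply this
    rw [add_zero, h0]

lemma dsl_X_ne (v₀ : σ) (u : τ → σ) {s : σ} (hs : s ≠ v₀) :
    dsl v₀ u (MvPowerSeries.X s : MvPowerSeries σ A) = 0 := by
  classical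
  apply MvPowerSeries.ext; intro d
  rw [coeff_dsl, ← pow_one (MvPowerSeries.X s), MvPowerSeries.coeff_X_pow, map_zero, if_neg]
  intro h0
  have h1 := congrArg (fun m : σ →₀ ℕ => m v₀) h0
  simp only [Finsupp.add_apply, Finsupp.single_eq_same] at h1
  rw [Finsupp.single_eq_of_ne hs.symm] at h1
  omega

lemma dsl_mul [DecidableEq σ] [DecidableEq τ] {u : τ → σ} (hu : Function.Injective u)
    {v₀ : σ} (hv : v₀ ∉ Set.range u) (P Q : MvPowerSeries σ A) :
    dsl v₀ u (P * Q) = dsl v₀ u P * sl u Q + sl u P * dsl v₀ u Q := by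
  apply MvPowerSeries.ext; intro d
  rw [map_add, coeff_dsl, MvPowerSeries.coeff_mul, MvPowerSeries.coeff_mul,
    MvPowerSeries.coeff_mul]
  rw [← Finset.sum_filter_add_sum_filter_not
    (antidiagonal (Finsupp.single v₀ 1 + Finsupp.mapDomain u d))
    (fun p : (σ →₀ ℕ) × (σ →₀ ℕ) => p.1 v₀ = 1)]
  have hnr : ∀ e : τ →₀ ℕ, Finsupp.mapDomain u e v₀ = 0 :=
    fun e => Finsupp.mapDomain_notin_range _ _ hv
  congr 1
  · symm
    apply Finset.sum_bij (i := fun p _ =>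
      (Finsupp.single v₀ 1 + Finsupp.mapDomain u p.1, Finsupp.mapDomain u p.2))
    · intro p hp
      rw [Finset.HasAntidiagonal.mem_antidiagonal] at hp
      rw [Finset.mem_filter, Finset.HasAntidiagonal.mem_antidiagonal]
      refine ⟨?_, ?_⟩
      · rw [add_assoc, ← Finsupp.mapDomain_add, hp]
      · rw [Finsupp.add_apply, Finsupp.single_eq_same, hnr]
    · intro p hp q hq hpq
      rw [Prod.mk.injEq] at hpq
      refine Prod.ext (Finsupp.mapDomain_injective hu (add_left_cancel hpq.1))
        (Finsupp.mapDomain_injective hu hpq.2)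
    · intro p hp
      rw [Finset.mem_filter, Finset.HasAntidiagonal.mem_antidiagonal] at hp
      obtain ⟨hp1, hp2⟩ := hp
      have hb0 : p.2 v₀ = 0 := by
        have h1 := congrArg (fun m : σ →₀ ℕ => m v₀) hp1
        simp only [Finsupp.add_apply, Finsupp.single_eq_same, hnr, hp2] at h1
        omega
      have hoff : ∀ v, v ∉ Set.range u → v ≠ v₀ → p.1 v = 0 ∧ p.2 v = 0 := by
        intro v hvr hvv
        have h1 := congrArg (fun m : σ →₀ ℕ => m v) hp1
        simp only [Finsupp.add_apply, Finsupp.single_eq_of_ne hvv,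
          Finsupp.mapDomain_notin_range _ _ hvr] at h1
        omega
      have ha : p.1 = Finsupp.single v₀ 1 + p.1.erase v₀ := by
        conv_lhs => rw [← Finsupp.single_add_erase v₀ p.1]
        rw [hp2]
      have hva : ∀ v, v ∉ Set.range u → (p.1.erase v₀) v = 0 := by
        intro v hvr
        by_cases hvv : v = v₀
        · subst hvv; exact Finsupp.erase_same
        · rw [Finsupp.erase_ne hvv]; exact (hoff v hvr hvv).1
      have hvb : ∀ v, v ∉ Set.range u → p.2 v = 0 := by
        intro v hvr
        by_cases hvv : v = v₀
        · subst hvv; exact hb0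
        · exact (hoff v hvr hvv).2
      obtain ⟨a', ha'⟩ := exists_mapDomain_eq hu hva
      obtain ⟨b', hb'⟩ := exists_mapDomain_eq hu hvb
      refine ⟨(a', b'), ?_, ?_⟩
      · rw [Finset.HasAntidiagonal.mem_antidiagonal]
        apply Finsupp.mapDomain_injective hu
        rw [Finsupp.mapDomain_add, ha', hb']
        apply add_left_cancel (a := Finsupp.single v₀ 1)
        rw [← add_assoc, ← ha, hp1]
      · show (Finsupp.single v₀ 1 + Finsupp.mapDomain u a', Finsupp.mapDomain u b') = p
        rw [ha', hb', ← ha]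
    · intros; rfl
  · symm
    apply Finset.sum_bij (i := fun p _ =>
      (Finsupp.mapDomain u p.1, Finsupp.single v₀ 1 + Finsupp.mapDomain u p.2))
    · intro p hp
      rw [Finset.HasAntidiagonal.mem_antidiagonal] at hp
      rw [Finset.mem_filter, Finset.HasAntidiagonal.mem_antidiagonal]
      refine ⟨?_, ?_⟩
      · rw [← add_assoc, add_comm (Finsupp.mapDomain u p.1), add_assoc,
          ← Finsupp.mapDomain_add, hp]
      · rw [hnr]; omega
    · intro p hp q hq hpq
      rw [Prod.mk.injEq] at hpq
      exact Prod.ext (Finsupp.mapDomain_injective hu hpq.1)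
        (Finsupp.mapDomain_injective hu (add_left_cancel hpq.2))
    · intro p hp
      rw [Finset.mem_filter, Finset.HasAntidiagonal.mem_antidiagonal] at hp
      obtain ⟨hp1, hp2⟩ := hp
      have ha0 : p.1 v₀ = 0 := by
        have h1 := congrArg (fun m : σ →₀ ℕ => m v₀) hp1
        simp only [Finsupp.add_apply, Finsupp.single_eq_same, hnr] at h1
        omega
      have hb1 : p.2 v₀ = 1 := by
        have h1 := congrArg (fun m : σ →₀ ℕ => m v₀) hp1
        simp only [Finsupp.add_apply, Finsupp.single_eq_same, hnr, ha0] at h1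
        omega
      have hoff : ∀ v, v ∉ Set.range u → v ≠ v₀ → p.1 v = 0 ∧ p.2 v = 0 := by
        intro v hvr hvv
        have h1 := congrArg (fun m : σ →₀ ℕ => m v) hp1
        simp only [Finsupp.add_apply, Finsupp.single_eq_of_ne hvv,
          Finsupp.mapDomain_notin_range _ _ hvr] at h1
        omega
      have hb : p.2 = Finsupp.single v₀ 1 + p.2.erase v₀ := by
        conv_lhs => rw [← Finsupp.single_add_erase v₀ p.2]
        rw [hb1]
      have hva : ∀ v, v ∉ Set.range u → p.1 v = 0 := by
        intro v hvr
        by_cases hvv : v = v₀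
        · subst hvv; exact ha0
        · exact (hoff v hvr hvv).1
      have hvb : ∀ v, v ∉ Set.range u → (p.2.erase v₀) v = 0 := by
        intro v hvr
        by_cases hvv : v = v₀
        · subst hvv; exact Finsupp.erase_same
        · rw [Finsupp.erase_ne hvv]; exact (hoff v hvr hvv).2
      obtain ⟨a', ha'⟩ := exists_mapDomain_eq hu hva
      obtain ⟨b', hb'⟩ := exists_mapDomain_eq hu hvb
      refine ⟨(a', b'), ?_, ?_⟩
      · rw [Finset.HasAntidiagonal.mem_antidiagonal]
        apply Finsupp.mapDomain_injective hu
        rw [Finsupp.mapDomain_add, ha', hb']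
        apply add_left_cancel (a := Finsupp.single v₀ 1)
        rw [← add_assoc, add_comm (Finsupp.single v₀ 1) p.1, add_assoc, ← hb, hp1]
      · show (Finsupp.mapDomain u a', Finsupp.single v₀ 1 + Finsupp.mapDomain u b') = p
        rw [ha', hb', ← hb]
    · intros; rfl

lemma dsl_pow [DecidableEq σ] [DecidableEq τ] {u : τ → σ} (hu : Function.Injective u)
    {v₀ : σ} (hv : v₀ ∉ Set.range u) (P : MvPowerSeries σ A) :
    ∀ n : ℕ, dsl v₀ u (P ^ (n + 1)) = (n + 1) • (sl u P ^ n * dsl v₀ u P)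
  | 0 => by norm_num
  | (n + 1) => by
    rw [pow_succ, dsl_mul hu hv, dsl_pow hu hv P n, sl_pow hu]
    simp only [nsmul_eq_mul]
    push_cast
    ring

lemma dsl_pow_of_eq_zero [DecidableEq σ] [DecidableEq τ] {u : τ → σ}
    (hu : Function.Injective u) {v₀ : σ} (hv : v₀ ∉ Set.range u) {Q : MvPowerSeries σ A}
    (hQ : dsl v₀ u Q = 0) (n : ℕ) : dsl v₀ u (Q ^ n) = 0 := by
  cases n with
  | zero => rw [pow_zero, dsl_one]
  | succ n => rw [dsl_pow hu hv, hQ, mul_zero, smul_zero]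

end FGLaux
namespace FGLaux

variable {A : Type*} [CommRing A] {σ τ : Type*}
open Finset FGL MvPowerSeries

lemma mon2_apply_zero (i j : ℕ) : mon2 i j 0 = i := by
  simp [mon2, Finsupp.single_apply]

lemma mon2_apply_one (i j : ℕ) : mon2 i j 1 = j := by
  simp [mon2, Finsupp.single_apply]

lemma deg_mon2 (i j : ℕ) : deg (mon2 i j) = i + j := by
  rw [mon2, deg_add, deg_single, deg_single]

lemma fin2_eq_mon2 (d : Fin 2 →₀ ℕ) : d = mon2 (d 0) (d 1) := by
  ext v
  fin_cases v <;> simp [mon2, Finsupp.single_apply]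

lemma deg_fin2 (d : Fin 2 →₀ ℕ) : deg d = d 0 + d 1 := by
  conv_lhs => rw [fin2_eq_mon2 d]
  rw [deg_mon2]

lemma coeff_dx1 (F : MvPowerSeries (Fin 2) A) (i j : ℕ) :
    MvPowerSeries.coeff (mon2 i j) (dx1 F) =
      ((i + 1 : ℕ) : A) * MvPowerSeries.coeff (mon2 (i + 1) j) F := by
  have h : mon2 i j + Finsupp.single 0 1 = mon2 (i + 1) j := by
    rw [mon2, mon2, add_right_comm, ← Finsupp.single_add]
  show ((mon2 i j 0 + 1 : ℕ) : A) * _ = _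
  rw [mon2_apply_zero, h]

lemma deg_le_left {d a b : τ →₀ ℕ} (h : a + b = d) : deg a ≤ deg d := by
  have := deg_add a b
  rw [h] at this
  omega

/-- Chain rule for `dsl` applied to a `subst2`, in the case where the second substituted
series has vanishing `dsl`. -/
lemma dsl_subst2' [DecidableEq σ] [DecidableEq τ] {u : τ → σ} (hu : Function.Injective u)
    {v₀ : σ} (hv : v₀ ∉ Set.range u) {F : MvPowerSeries (Fin 2) A}
    {P Q : MvPowerSeries σ A} (hP : MvPowerSeries.constantCoeff P = 0)
    (hQ : MvPowerSeries.constantCoeff Q = 0) (hdQ : dsl v₀ u Q = 0) :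
    dsl v₀ u (subst2 F P Q) = subst2 (dx1 F) (sl u P) (sl u Q) * dsl v₀ u P := by
  have hccP : MvPowerSeries.constantCoeff (sl u P) = 0 := by
    rw [constantCoeff_sl, hP]
  have hccQ : MvPowerSeries.constantCoeff (sl u Q) = 0 := by
    rw [constantCoeff_sl, hQ]
  apply MvPowerSeries.ext; intro d
  set D := deg d with hD
  -- key per-term identity
  have keyij : ∀ i j : ℕ, dsl v₀ u (P ^ i * Q ^ j) =
      i • (sl u P ^ (i - 1) * dsl v₀ u P) * sl u Q ^ j := by
    intro i j
    cases i with
    | zero =>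
      rw [pow_zero, one_mul, dsl_pow_of_eq_zero hu hv hdQ, zero_smul, zero_mul]
    | succ n =>
      rw [dsl_mul hu hv, dsl_pow hu hv, dsl_pow_of_eq_zero hu hv hdQ, mul_zero, add_zero,
        sl_pow hu, Nat.succ_sub_one]
  -- LHS
  have hdeg : deg (Finsupp.single v₀ 1 + Finsupp.mapDomain u d) = D + 1 := by
    rw [deg_add, deg_single, deg_mapDomain, add_comm]
  rw [coeff_dsl, coeff_subst2_def, hdeg]
  have hterm : ∀ p : ℕ × ℕ,
      MvPowerSeries.coeff (Finsupp.single v₀ 1 + Finsupp.mapDomain u d) (P ^ p.1 * Q ^ p.2)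
        = (p.1 : A) * MvPowerSeries.coeff d
            (sl u P ^ (p.1 - 1) * dsl v₀ u P * sl u Q ^ p.2) := by
    intro p
    rw [← coeff_dsl, keyij, smul_mul_assoc]
    rw [map_nsmul]
    rw [nsmul_eq_mul]
  calc
    ∑ p ∈ range (D + 1 + 1) ×ˢ range (D + 1 + 1),
        MvPowerSeries.coeff (mon2 p.1 p.2) F *
          MvPowerSeries.coeff (Finsupp.single v₀ 1 + Finsupp.mapDomain u d)
            (P ^ p.1 * Q ^ p.2)
      = ∑ i ∈ range (D + 2), ∑ j ∈ range (D + 2),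
          MvPowerSeries.coeff (mon2 i j) F *
            ((i : A) * MvPowerSeries.coeff d
              (sl u P ^ (i - 1) * dsl v₀ u P * sl u Q ^ j)) := by
        rw [Finset.sum_product]
        exact Finset.sum_congr rfl fun i _ => Finset.sum_congr rfl fun j _ => by
          rw [hterm (i, j)]
    _ = ∑ i ∈ range (D + 1), ∑ j ∈ range (D + 2),
          MvPowerSeries.coeff (mon2 (i + 1) j) F *
            (((i + 1 : ℕ) : A) * MvPowerSeries.coeff d
              (sl u P ^ i * dsl v₀ u P * sl u Q ^ j)) := by
        rw [show D + 2 = (D + 1) + 1 from rfl, Finset.sum_range_succ']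
        simp only [Nat.cast_zero, zero_mul, mul_zero, Finset.sum_const_zero, add_zero,
          Nat.add_sub_cancel]
    _ = MvPowerSeries.coeff d (subst2 (dx1 F) (sl u P) (sl u Q) * dsl v₀ u P) := by
        symm
        rw [MvPowerSeries.coeff_mul]
        have hexp : ∀ p ∈ antidiagonal d,
            MvPowerSeries.coeff p.1 (subst2 (dx1 F) (sl u P) (sl u Q)) *
              MvPowerSeries.coeff p.2 (dsl v₀ u P)
            = ∑ q ∈ range (D + 1) ×ˢ range (D + 2),
                MvPowerSeries.coeff (mon2 q.1 q.2) (dx1 F) *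
                  (MvPowerSeries.coeff p.1 (sl u P ^ q.1 * sl u Q ^ q.2) *
                    MvPowerSeries.coeff p.2 (dsl v₀ u P)) := by
          intro p hp
          rw [Finset.HasAntidiagonal.mem_antidiagonal] at hp
          have h1 : deg p.1 ≤ D := deg_le_left hp
          rw [coeff_subst2 hccP hccQ p.1 (N := D + 1) (M := D + 2) (by omega) (by omega),
            Finset.sum_mul]
          exact Finset.sum_congr rfl fun q _ => by ring
        rw [Finset.sum_congr rfl hexp, Finset.sum_comm, Finset.sum_product]
        refine Finset.sum_congr rfl fun i _ => Finset.sum_congr rfl fun j _ => ?_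
        rw [← Finset.mul_sum, ← MvPowerSeries.coeff_mul, coeff_dx1,
          show sl u P ^ i * sl u Q ^ j * dsl v₀ u P
            = sl u P ^ i * dsl v₀ u P * sl u Q ^ j by ring]
        ring

end FGLaux
namespace FGLaux

variable {A : Type*} [CommRing A] {σ τ : Type*}
open Finset FGL MvPowerSeries

lemma substPS_one (P : MvPowerSeries τ A) : substPS (1 : PowerSeries A) P = 1 := by
  classical
  apply MvPowerSeries.ext; intro d
  rw [coeff_substPS_def]
  rw [Finset.sum_eq_single 0]
  · rw [pow_zero, PowerSeries.coeff_zero_eq_constantCoeff, map_one, one_mul]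
  · intro n _ hn
    rw [PowerSeries.coeff_one, if_neg hn, zero_mul]
  · intro h
    exact absurd (Finset.mem_range.2 (by omega)) h

lemma substPS_C (c : A) (P : MvPowerSeries τ A) :
    substPS (PowerSeries.C c) P = MvPowerSeries.C c := by
  classical
  apply MvPowerSeries.ext; intro d
  rw [coeff_substPS_def]
  rw [Finset.sum_eq_single 0]
  · rw [pow_zero, PowerSeries.coeff_zero_C, MvPowerSeries.coeff_one, MvPowerSeries.coeff_C]
    split <;> simp
  · intro n _ hn
    rw [PowerSeries.coeff_C, if_neg hn, zero_mul]
  · intro h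
    exact absurd (Finset.mem_range.2 (by omega)) h

lemma substPS_mul {P : MvPowerSeries τ A} (hP : MvPowerSeries.constantCoeff P = 0)
    (f g : PowerSeries A) : substPS (f * g) P = substPS f P * substPS g P := by
  classical
  apply MvPowerSeries.ext; intro d
  set D := deg d with hD
  rw [coeff_substPS_def, MvPowerSeries.coeff_mul]
  have hexp : ∀ p ∈ antidiagonal d,
      MvPowerSeries.coeff p.1 (substPS f P) * MvPowerSeries.coeff p.2 (substPS g P)
        = ∑ q ∈ range (D + 1) ×ˢ range (D + 1),
            (PowerSeries.coeff q.1 f * MvPowerSeries.coeff p.1 (P ^ q.1)) *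
              (PowerSeries.coeff q.2 g * MvPowerSeries.coeff p.2 (P ^ q.2)) := by
    intro p hp
    rw [Finset.HasAntidiagonal.mem_antidiagonal] at hp
    have h1 : deg p.1 ≤ D := deg_le_left hp
    have h2 : deg p.2 ≤ D := deg_le_left (by rw [add_comm] at hp; exact hp)
    rw [coeff_substPS hP p.1 (N := D + 1) (by omega),
      coeff_substPS hP p.2 (N := D + 1) (by omega), Finset.sum_mul_sum]
    rw [Finset.sum_product]
  rw [Finset.sum_congr rfl hexp, Finset.sum_comm]
  -- RHS now : ∑ q ∈ product, ∑ p ∈ antidiagonal d, ...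
  have hq : ∀ q ∈ range (D + 1) ×ˢ range (D + 1),
      (∑ p ∈ antidiagonal d,
        (PowerSeries.coeff q.1 f * MvPowerSeries.coeff p.1 (P ^ q.1)) *
          (PowerSeries.coeff q.2 g * MvPowerSeries.coeff p.2 (P ^ q.2)))
        = PowerSeries.coeff q.1 f * PowerSeries.coeff q.2 g *
            MvPowerSeries.coeff d (P ^ (q.1 + q.2)) := by
    intro q _
    rw [pow_add, MvPowerSeries.coeff_mul, Finset.mul_sum]
    exact Finset.sum_congr rfl fun p _ => by ring
  rw [Finset.sum_congr rfl hq]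
  -- LHS : ∑ n ∈ range (D+1), coeff n (f*g) * coeff d (P^n)
  have hL : ∀ n ∈ range (D + 1),
      PowerSeries.coeff n (f * g) * MvPowerSeries.coeff d (P ^ n)
        = ∑ p ∈ antidiagonal n, PowerSeries.coeff p.1 f * PowerSeries.coeff p.2 g *
            MvPowerSeries.coeff d (P ^ (p.1 + p.2)) := by
    intro n _
    rw [PowerSeries.coeff_mul, Finset.sum_mul]
    refine Finset.sum_congr rfl fun p hp => ?_
    rw [Finset.HasAntidiagonal.mem_antidiagonal] at hp
    rw [hp]
  rw [Finset.sum_congr rfl hL]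
  -- combinatorial regrouping
  set G : ℕ × ℕ → A := fun p => PowerSeries.coeff p.1 f * PowerSeries.coeff p.2 g *
    MvPowerSeries.coeff d (P ^ (p.1 + p.2)) with hG
  have step1 : ∑ q ∈ range (D + 1) ×ˢ range (D + 1), G q
      = ∑ q ∈ (range (D + 1) ×ˢ range (D + 1)).filter (fun p => p.1 + p.2 ≤ D), G q := by
    symm
    apply Finset.sum_subset (Finset.filter_subset _ _)
    intro q _ hq'
    rw [Finset.mem_filter, not_and] at hq'
    rcases Finset.mem_product.mp ‹q ∈ _› with ⟨h1, h2⟩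
    have : ¬ (q.1 + q.2 ≤ D) := by
      intro hc
      exact hq' (Finset.mem_product.2 ⟨h1, h2⟩) hc
    rw [hG]
    show PowerSeries.coeff q.1 f * PowerSeries.coeff q.2 g *
      MvPowerSeries.coeff d (P ^ (q.1 + q.2)) = 0
    rw [coeff_pow_eq_zero hP (by omega), mul_zero]
  have step2 : ∑ q ∈ (range (D + 1) ×ˢ range (D + 1)).filter (fun p => p.1 + p.2 ≤ D), G q
      = ∑ n ∈ range (D + 1),
          ∑ q ∈ ((range (D + 1) ×ˢ range (D + 1)).filter
            (fun p => p.1 + p.2 ≤ D)).filter (fun p => p.1 + p.2 = n), G q := by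
    symm
    apply Finset.sum_fiberwise_of_maps_to
    intro q hq'
    rw [Finset.mem_filter] at hq'
    rw [Finset.mem_range]
    omega
  have step3 : ∀ n ∈ range (D + 1),
      ((range (D + 1) ×ˢ range (D + 1)).filter
        (fun p => p.1 + p.2 ≤ D)).filter (fun p => p.1 + p.2 = n) = antidiagonal n := by
    intro n hn
    rw [Finset.mem_range] at hn
    ext p
    rw [Finset.mem_filter, Finset.mem_filter, Finset.mem_product, Finset.mem_range,
      Finset.mem_range, Finset.HasAntidiagonal.mem_antidiagonal]
    constructor
    · exact fun h => h.2
    · intro h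
      refine ⟨⟨⟨by omega, by omega⟩, by omega⟩, h⟩
  rw [step1, step2]
  refine Finset.sum_congr rfl fun n hn => ?_
  rw [step3 n hn]

lemma substPS_zero (f : PowerSeries A) :
    substPS f (0 : MvPowerSeries τ A) = MvPowerSeries.C (PowerSeries.constantCoeff f) := by
  classical
  apply MvPowerSeries.ext; intro d
  rw [coeff_substPS_def]
  rw [Finset.sum_eq_single 0]
  · rw [pow_zero, MvPowerSeries.coeff_one, MvPowerSeries.coeff_C,
      PowerSeries.coeff_zero_eq_constantCoeff]
    split <;> simp
  · intro n _ hn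
    rw [zero_pow hn, map_zero, mul_zero]
  · intro h
    exact absurd (Finset.mem_range.2 (by omega)) h

lemma substPS_X (f : PowerSeries A) :
    substPS f (MvPowerSeries.X () : MvPowerSeries Unit A) = f := by
  classical
  apply MvPowerSeries.ext; intro d
  rw [coeff_substPS_def]
  have hdeg : deg d = d () := by
    conv_lhs => rw [Finsupp.unique_single d]
    rw [deg_single]
  have hco : ∀ n, MvPowerSeries.coeff d ((MvPowerSeries.X () : MvPowerSeries Unit A) ^ n)
      = if d = Finsupp.single () n then 1 else 0 := fun n => MvPowerSeries.coeff_X_pow d () n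
  rw [Finset.sum_eq_single (d ())]
  · rw [hco, if_pos (Finsupp.unique_single d), mul_one]
    show PowerSeries.coeff (d ()) f = MvPowerSeries.coeff d f
    conv_rhs => rw [Finsupp.unique_single d]
    rfl
  · intro n _ hn
    rw [hco, if_neg, mul_zero]
    intro hc
    apply hn
    rw [hc, Finsupp.single_eq_same]
  · intro h
    exact absurd (Finset.mem_range.2 (by omega)) h

lemma substPS_X' (f : PowerSeries A) :
    substPS f (PowerSeries.X : PowerSeries A) = f := substPS_X f

lemma substPS_X_subst {h : MvPowerSeries τ A} (hh : MvPowerSeries.constantCoeff h = 0) :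
    substPS (PowerSeries.X : PowerSeries A) h = h := by
  classical
  apply MvPowerSeries.ext; intro d
  rw [coeff_substPS_def]
  by_cases hd : deg d = 0
  · rw [hd]
    rw [Finset.sum_eq_single 0]
    · rw [PowerSeries.coeff_zero_eq_constantCoeff, PowerSeries.constantCoeff_X, zero_mul]
      rw [deg_eq_zero hd, coeff_zero_eq_constantCoeff_apply, hh]
    · intro n hn hn'
      rw [Finset.mem_range] at hn
      omega
    · intro hc
      exact absurd (Finset.mem_range.2 (by omega)) hc
  · rw [Finset.sum_eq_single 1]
    · rw [PowerSeries.coeff_one_X, pow_one, one_mul]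
    · intro n _ hn
      rw [PowerSeries.coeff_X, if_neg hn, zero_mul]
    · intro hc
      exact absurd (Finset.mem_range.2 (by omega)) hc

lemma subst2_zero_left (P : MvPowerSeries (Fin 2) A) (h : MvPowerSeries τ A) :
    subst2 P 0 h = substPS (sl (fun _ : Unit => (1 : Fin 2)) P) h := by
  classical
  apply MvPowerSeries.ext; intro d
  rw [coeff_subst2_def, coeff_substPS_def, Finset.sum_product]
  rw [Finset.sum_eq_single 0]
  · refine Finset.sum_congr rfl fun j _ => ?_
    rw [pow_zero, one_mul]
    congr 1
    show MvPowerSeries.coeff (mon2 0 j) P = _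
    have : Finsupp.mapDomain (fun _ : Unit => (1 : Fin 2)) (Finsupp.single () j)
        = Finsupp.single 1 j := Finsupp.mapDomain_single
    rw [PowerSeries.coeff, coeff_sl]
    rw [this]
    congr 1
    rw [mon2, Finsupp.single_zero, zero_add]
  · intro i _ hi
    apply Finset.sum_eq_zero
    intro j _
    rw [zero_pow hi, zero_mul, map_zero, mul_zero]
  · intro hc
    exact absurd (Finset.mem_range.2 (by omega)) hc

lemma subst2_zero_right (P : MvPowerSeries (Fin 2) A) (g : MvPowerSeries τ A) :
    subst2 P g 0 = substPS (sl (fun _ : Unit => (0 : Fin 2)) P) g := by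
  classical
  apply MvPowerSeries.ext; intro d
  rw [coeff_subst2_def, coeff_substPS_def, Finset.sum_product_right]
  rw [Finset.sum_eq_single 0]
  · refine Finset.sum_congr rfl fun i _ => ?_
    rw [pow_zero, mul_one]
    congr 1
    show MvPowerSeries.coeff (mon2 i 0) P = _
    have : Finsupp.mapDomain (fun _ : Unit => (0 : Fin 2)) (Finsupp.single () i)
        = Finsupp.single 0 i := Finsupp.mapDomain_single
    rw [PowerSeries.coeff, coeff_sl]
    rw [this]
    congr 1
    rw [mon2, Finsupp.single_zero, add_zero]
  · intro j _ hj
    apply Finset.sum_eq_zero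
    intro i _
    rw [zero_pow hj, mul_zero, map_zero, mul_zero]
  · intro hc
    exact absurd (Finset.mem_range.2 (by omega)) hc

lemma mon2_inj {i j i' j' : ℕ} (h : mon2 i j = mon2 i' j') : i = i' ∧ j = j' := by
  constructor
  · rw [← mon2_apply_zero i j, ← mon2_apply_zero i' j', h]
  · rw [← mon2_apply_one i j, ← mon2_apply_one i' j', h]

lemma subst2_X_X (P : MvPowerSeries (Fin 2) A) :
    subst2 P (MvPowerSeries.X 0) (MvPowerSeries.X 1) = P := by
  classical
  apply MvPowerSeries.ext; intro d
  rw [coeff_subst2_def]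
  have hco : ∀ i j : ℕ, ((MvPowerSeries.X 0 : MvPowerSeries (Fin 2) A) ^ i *
      (MvPowerSeries.X 1 : MvPowerSeries (Fin 2) A) ^ j) = monomial (mon2 i j) 1 := by
    intro i j
    rw [MvPowerSeries.X_pow_eq, MvPowerSeries.X_pow_eq, MvPowerSeries.monomial_mul_monomial,
      one_mul, mon2]
  rw [Finset.sum_eq_single (d 0, d 1)]
  · rw [hco, coeff_monomial, if_pos (fin2_eq_mon2 d), mul_one]
    exact congrArg (fun e : Fin 2 →₀ ℕ => MvPowerSeries.coeff e P) (fin2_eq_mon2 d).symm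
  · rintro ⟨q1, q2⟩ _ hq
    rw [hco, coeff_monomial, if_neg, mul_zero]
    intro hc
    apply hq
    have h2 := mon2_inj (hc.symm.trans (fin2_eq_mon2 d))
    rw [Prod.mk.injEq]
    exact h2
  · intro hc
    have hdd := deg_fin2 d
    exact absurd (Finset.mem_product.2 ⟨Finset.mem_range.2 (by omega),
      Finset.mem_range.2 (by omega)⟩) hc

end FGLaux
namespace FGLaux

variable {A : Type*} [CommRing A]
open Finset FGL MvPowerSeries

lemma hu0 : Function.Injective (fun _ : Unit => (0 : Fin 2)) :=
  fun a b _ => Subsingleton.elim a b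

lemma hu1 : Function.Injective (fun _ : Unit => (1 : Fin 2)) :=
  fun a b _ => Subsingleton.elim a b

lemma hus : Function.Injective (Fin.succ : Fin 2 → Fin 3) := Fin.succ_injective 2

lemma hv0 : (0 : Fin 3) ∉ Set.range (Fin.succ : Fin 2 → Fin 3) := by
  rintro ⟨t, ht⟩
  exact Fin.succ_ne_zero t ht

lemma h0u1 : (0 : Fin 2) ∉ Set.range (fun _ : Unit => (1 : Fin 2)) := by
  rintro ⟨t, ht⟩
  have hne : (1 : Fin 2) ≠ 0 := by decide
  exact hne ht

variable {F : MvPowerSeries (Fin 2) A}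

lemma huN0 : Function.Injective (fun _ : Unit => (0 : ℕ)) :=
  fun a b _ => Subsingleton.elim a b

lemma huN1 : Function.Injective (fun _ : Unit => (1 : ℕ)) :=
  fun a b _ => Subsingleton.elim a b

lemma sluN0_X {A : Type*} [CommRing A] :
    sl (fun _ : Unit => (0 : ℕ)) (MvPowerSeries.X 0 : MvPowerSeries ℕ A)
      = MvPowerSeries.X () := sl_X_mem huN0 ()

lemma sluN1_X {A : Type*} [CommRing A] :
    sl (fun _ : Unit => (1 : ℕ)) (MvPowerSeries.X 1 : MvPowerSeries ℕ A)
      = MvPowerSeries.X () := sl_X_mem huN1 ()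

lemma slu0_X :
    sl (fun _ : Unit => (0 : Fin 2)) (MvPowerSeries.X 0 : MvPowerSeries (Fin 2) A)
      = MvPowerSeries.X () := sl_X_mem hu0 ()

lemma slu1_X :
    sl (fun _ : Unit => (1 : Fin 2)) (MvPowerSeries.X 1 : MvPowerSeries (Fin 2) A)
      = MvPowerSeries.X () := sl_X_mem hu1 ()

lemma A1 (hF : IsFGL F) :
    sl (fun _ : Unit => (0 : Fin 2)) F = (PowerSeries.X : PowerSeries A) := by
  have h := hF.1
  rw [subst2_zero_right] at h
  have h2 : sl (fun _ : Unit => (0 : ℕ))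
      (substPS (sl (fun _ : Unit => (0 : Fin 2)) F)
        (MvPowerSeries.X 0 : MvPowerSeries ℕ A))
      = sl (fun _ : Unit => (0 : ℕ)) (MvPowerSeries.X 0 : MvPowerSeries ℕ A) := by
    rw [h]
  rw [sl_substPS huN0, sluN0_X, substPS_X] at h2
  exact h2

lemma A2 (hF : IsFGL F) :
    sl (fun _ : Unit => (1 : Fin 2)) F = (PowerSeries.X : PowerSeries A) := by
  have h := hF.2.1
  rw [subst2_zero_left] at h
  have h2 : sl (fun _ : Unit => (1 : ℕ))
      (substPS (sl (fun _ : Unit => (1 : Fin 2)) F)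
        (MvPowerSeries.X 1 : MvPowerSeries ℕ A))
      = sl (fun _ : Unit => (1 : ℕ)) (MvPowerSeries.X 1 : MvPowerSeries ℕ A) := by
    rw [h]
  rw [sl_substPS huN1, sluN1_X, substPS_X] at h2
  exact h2

lemma ccF (hF : IsFGL F) : MvPowerSeries.constantCoeff F = 0 := by
  rw [← constantCoeff_sl (fun _ : Unit => (1 : Fin 2)) F, A2 hF]
  exact MvPowerSeries.constantCoeff_X ()

lemma dx1AtZero_eq (F : MvPowerSeries (Fin 2) A) :
    dx1AtZero F = sl (fun _ : Unit => (1 : Fin 2)) (dx1 F) := by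
  apply PowerSeries.ext; intro n
  unfold dx1AtZero
  rw [PowerSeries.coeff_mk]
  rw [PowerSeries.coeff, coeff_sl, Finsupp.mapDomain_single]

lemma coeff_single01 (hF : IsFGL F) : MvPowerSeries.coeff (Finsupp.single 0 1) F = 1 := by
  have h := congrArg (PowerSeries.coeff 1) (A1 hF)
  rw [PowerSeries.coeff_one_X] at h
  rw [PowerSeries.coeff, coeff_sl, Finsupp.mapDomain_single] at h
  exact h

lemma ccg (hF : IsFGL F) : PowerSeries.constantCoeff (dx1AtZero F) = 1 := by
  rw [dx1AtZero_eq]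
  show MvPowerSeries.constantCoeff _ = 1
  rw [constantCoeff_sl, ← coeff_zero_eq_constantCoeff_apply]
  have h0 : MvPowerSeries.coeff (0 : Fin 2 →₀ ℕ) (dx1 F)
      = (((0 : Fin 2 →₀ ℕ) 0 + 1 : ℕ) : A) *
          MvPowerSeries.coeff ((0 : Fin 2 →₀ ℕ) + Finsupp.single 0 1) F := rfl
  rw [h0, zero_add]
  simp only [Finsupp.coe_zero, Pi.zero_apply, Nat.cast_one, zero_add]
  rw [coeff_single01 hF, one_mul]

lemma key (hF : IsFGL F) :
    dx1 F * substPS (dx1AtZero F) (MvPowerSeries.X 0) = substPS (dx1AtZero F) F := by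
  have h := congrArg (dsl (0 : Fin 3) (Fin.succ : Fin 2 → Fin 3)) hF.2.2.2
  have hsl0 : sl (Fin.succ : Fin 2 → Fin 3)
      (MvPowerSeries.X 0 : MvPowerSeries (Fin 3) A) = 0 := sl_X_not_mem hv0
  have hsl1 : sl (Fin.succ : Fin 2 → Fin 3)
      (MvPowerSeries.X 1 : MvPowerSeries (Fin 3) A) = MvPowerSeries.X 0 := by
    have h1 := sl_X_mem (A := A) hus (0 : Fin 2)
    rwa [show (Fin.succ (0 : Fin 2) : Fin 3) = 1 from rfl] at h1
  have hsl2 : sl (Fin.succ : Fin 2 → Fin 3)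
      (MvPowerSeries.X 2 : MvPowerSeries (Fin 3) A) = MvPowerSeries.X 1 := by
    have h1 := sl_X_mem (A := A) hus (1 : Fin 2)
    rwa [show (Fin.succ (1 : Fin 2) : Fin 3) = 2 from rfl] at h1
  have hd0 : dsl (0 : Fin 3) Fin.succ (MvPowerSeries.X 0 : MvPowerSeries (Fin 3) A) = 1 :=
    dsl_X_self hus hv0
  have hd1 : dsl (0 : Fin 3) Fin.succ (MvPowerSeries.X 1 : MvPowerSeries (Fin 3) A) = 0 :=
    dsl_X_ne _ _ (by decide)
  have hd2 : dsl (0 : Fin 3) Fin.succ (MvPowerSeries.X 2 : MvPowerSeries (Fin 3) A) = 0 :=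
    dsl_X_ne _ _ (by decide)
  have hV : sl (Fin.succ : Fin 2 → Fin 3)
      (subst2 F (MvPowerSeries.X 0) (MvPowerSeries.X 1) : MvPowerSeries (Fin 3) A)
        = MvPowerSeries.X 0 := by
    rw [sl_subst2 hus, hsl0, hsl1, subst2_zero_left, A2 hF,
      substPS_X_subst (MvPowerSeries.constantCoeff_X 0)]
  have hW : sl (Fin.succ : Fin 2 → Fin 3)
      (subst2 F (MvPowerSeries.X 1) (MvPowerSeries.X 2) : MvPowerSeries (Fin 3) A) = F := by
    rw [sl_subst2 hus, hsl1, hsl2, subst2_X_X]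
  have hdV : dsl (0 : Fin 3) Fin.succ
      (subst2 F (MvPowerSeries.X 0) (MvPowerSeries.X 1) : MvPowerSeries (Fin 3) A)
        = substPS (dx1AtZero F) (MvPowerSeries.X 0) := by
    rw [dsl_subst2' hus hv0 (MvPowerSeries.constantCoeff_X _)
      (MvPowerSeries.constantCoeff_X _) hd1, hsl0, hsl1, hd0, mul_one, subst2_zero_left,
      ← dx1AtZero_eq]
  have hdW : dsl (0 : Fin 3) Fin.succ
      (subst2 F (MvPowerSeries.X 1) (MvPowerSeries.X 2) : MvPowerSeries (Fin 3) A) = 0 := by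
    rw [dsl_subst2' hus hv0 (MvPowerSeries.constantCoeff_X _)
      (MvPowerSeries.constantCoeff_X _) hd2, hd1, mul_zero]
  have hccV : MvPowerSeries.constantCoeff
      (subst2 F (MvPowerSeries.X 0) (MvPowerSeries.X 1) : MvPowerSeries (Fin 3) A) = 0 := by
    rw [← constantCoeff_sl (Fin.succ : Fin 2 → Fin 3), hV]
    exact MvPowerSeries.constantCoeff_X 0
  have hccW : MvPowerSeries.constantCoeff
      (subst2 F (MvPowerSeries.X 1) (MvPowerSeries.X 2) : MvPowerSeries (Fin 3) A) = 0 := by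
    rw [← constantCoeff_sl (Fin.succ : Fin 2 → Fin 3), hW]
    exact ccF hF
  rw [dsl_subst2' hus hv0 hccV (MvPowerSeries.constantCoeff_X _) hd2,
    dsl_subst2' hus hv0 (MvPowerSeries.constantCoeff_X _) hccW hdW] at h
  rw [hV, hsl2, hdV, subst2_X_X, hsl0, hW, hd0, mul_one, subst2_zero_left,
    ← dx1AtZero_eq] at h
  exact h

lemma main (F : MvPowerSeries (Fin 2) A) (hF : IsFGL F) :
    PowerSeries.constantCoeff (dx1AtZero F) = 1 ∧
    IsUnit (dx1AtZero F) ∧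
    ∀ f : PowerSeries A,
      substPS f F * dx1 F = substPS f (MvPowerSeries.X 0) ↔
        f = PowerSeries.C (PowerSeries.constantCoeff f) *
            PowerSeries.invOfUnit (dx1AtZero F) 1 := by
  have hccg := ccg hF
  set g := dx1AtZero F with hg
  have hgunit : g * PowerSeries.invOfUnit g 1 = 1 :=
    PowerSeries.mul_invOfUnit g 1 (by rw [hccg]; rfl)
  refine ⟨hccg, ⟨⟨_, _, hgunit, by rw [mul_comm]; exact hgunit⟩, rfl⟩, fun f => ?_⟩
  have hccF := ccF hF
  have hccX0 : MvPowerSeries.constantCoeff (MvPowerSeries.X 0 : MvPowerSeries (Fin 2) A) = 0 :=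
    MvPowerSeries.constantCoeff_X 0
  constructor
  · intro hE
    have h : sl (fun _ : Unit => (1 : Fin 2)) (substPS f F * dx1 F)
        = sl (fun _ : Unit => (1 : Fin 2))
            (substPS f (MvPowerSeries.X 0 : MvPowerSeries (Fin 2) A)) := by
      rw [hE]
    rw [sl_mul hu1, sl_substPS hu1, sl_substPS hu1, A2 hF, sl_X_not_mem h0u1,
      ← dx1AtZero_eq, substPS_zero, substPS_X', ← hg] at h
    have hfg : f * g = MvPowerSeries.C (PowerSeries.constantCoeff f) := h
    calc f = f * (g * PowerSeries.invOfUnit g 1) := by rw [hgunit, mul_one]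
      _ = (f * g) * PowerSeries.invOfUnit g 1 := by ring
      _ = MvPowerSeries.C (PowerSeries.constantCoeff f) *
            PowerSeries.invOfUnit g 1 := by rw [hfg]
      _ = PowerSeries.C (PowerSeries.constantCoeff f) *
            PowerSeries.invOfUnit g 1 := rfl
  · intro hf
    rw [hf, substPS_mul hccF, substPS_mul hccX0, substPS_C, substPS_C]
    have hK := key hF
    have h1 : substPS g (MvPowerSeries.X 0 : MvPowerSeries (Fin 2) A) *
        substPS (PowerSeries.invOfUnit g 1) (MvPowerSeries.X 0 : MvPowerSeries (Fin 2) A)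
          = 1 := by
      rw [← substPS_mul hccX0, hgunit, substPS_one]
    have h2 : substPS g F * substPS (PowerSeries.invOfUnit g 1) F = 1 := by
      rw [← substPS_mul hccF, hgunit, substPS_one]
    have hmain : substPS (PowerSeries.invOfUnit g 1) F * dx1 F
        = substPS (PowerSeries.invOfUnit g 1) (MvPowerSeries.X 0 : MvPowerSeries (Fin 2) A) := by
      calc substPS (PowerSeries.invOfUnit g 1) F * dx1 F
          = substPS (PowerSeries.invOfUnit g 1) F * dx1 F *
              (substPS g (MvPowerSeries.X 0) *
                substPS (PowerSeries.invOfUnit g 1) (MvPowerSeries.X 0)) := by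
            rw [h1, mul_one]
        _ = substPS (PowerSeries.invOfUnit g 1) F *
              (dx1 F * substPS g (MvPowerSeries.X 0)) *
                substPS (PowerSeries.invOfUnit g 1) (MvPowerSeries.X 0) := by ring
        _ = substPS (PowerSeries.invOfUnit g 1) F * substPS g F *
                substPS (PowerSeries.invOfUnit g 1) (MvPowerSeries.X 0) := by rw [hK]
        _ = (substPS g F * substPS (PowerSeries.invOfUnit g 1) F) *
                substPS (PowerSeries.invOfUnit g 1) (MvPowerSeries.X 0) := by ring
        _ = substPS (PowerSeries.invOfUnit g 1) (MvPowerSeries.X 0) := by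
            rw [h2, one_mul]
    rw [mul_assoc, hmain]

end FGLaux

/-- **Invariant differentials.** For a formal group law `F` over `A`, the series
`(∂₁F)(0,x)` has constant term `1`, hence is a unit of `A⟦x⟧`, and a differential
`f(x)dx` is invariant, i.e. `f(F(x,y))·∂₁F(x,y) = f(x)`, if and only if
`f(x) = f(0)·((∂₁F)(0,x))⁻¹`.  In particular the module of invariant differentials
is free of rank one, generated by `dx/(∂₁F)(0,x)`. -/
theorem invariant_differentials (A : Type*) [CommRing A]
    (F : MvPowerSeries (Fin 2) A) (hF : IsFGL F) :
    PowerSeries.constantCoeff (dx1AtZero F) = 1 ∧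
    IsUnit (dx1AtZero F) ∧
    ∀ f : PowerSeries A,
      substPS f F * dx1 F = substPS f (MvPowerSeries.X 0) ↔
        f = PowerSeries.C (PowerSeries.constantCoeff f) *
            PowerSeries.invOfUnit (dx1AtZero F) 1 := by
  exact FGLaux.main F hF
end
end

section
/- Let p be a prime, A a commutative ring with pA = 0, and f : F → G a homomorphism of formal group laws over A whose linear coefficient f′(0) is 0. Then there is a unique power series g ∈ A⟦x⟧ with f(x) = g(x^p), and this g is a homomorphism of formal group laws g : F^{(p)} → G. (Homomorphisms with vanishing derivative factor uniquely through the relative Frobenius.) -/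
noncomputable section

open FGL

/-- The result `F^{(p)}` of raising each coefficient of a two-variable power series
to the `p`-th power (the pushforward along the Frobenius of the base ring). -/
def frobMv {A : Type*} [CommRing A] (p : ℕ) (F : MvPowerSeries (Fin 2) A) :
    MvPowerSeries (Fin 2) A :=
  fun d => MvPowerSeries.coeff d F ^ p

/-- The result `f^{(p)}` of raising each coefficient of a one-variable power series
to the `p`-th power. -/
def frobPS {A : Type*} [CommRing A] (p : ℕ) (f : PowerSeries A) : PowerSeries A :=
  PowerSeries.mk fun n => PowerSeries.coeff n f ^ p

namespace FGLAux

open Finset FGL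

variable {A : Type*} [CommRing A] {τ : Type*}

theorem deg_single {σ : Type*} (i : σ) (n : ℕ) : deg (Finsupp.single i n) = n := by
  simp [deg, Finsupp.sum_single_index]

theorem deg_add {σ : Type*} (d e : σ →₀ ℕ) : deg (d + e) = deg d + deg e := by
  classical
  exact Finsupp.sum_add_index (by simp) (by simp)

theorem deg_eq_zero {σ : Type*} {d : σ →₀ ℕ} (h : deg d = 0) : d = 0 := by
  ext a
  simp only [Finsupp.coe_zero, Pi.zero_apply]
  by_contra ha
  have hmem : a ∈ d.support := Finsupp.mem_support_iff.mpr (by simpa using ha)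
  have : d a ≤ deg d := by
    rw [deg, Finsupp.sum]
    exact Finset.single_le_sum (f := fun a => d a) (fun _ _ => Nat.zero_le _) hmem
  omega

theorem mon2_apply0 (i j : ℕ) : (mon2 i j) 0 = i := by
  simp [mon2, Finsupp.single_apply]

theorem mon2_apply1 (i j : ℕ) : (mon2 i j) 1 = j := by
  simp [mon2, Finsupp.single_apply]

theorem eq_mon2 (d : Fin 2 →₀ ℕ) : d = mon2 (d 0) (d 1) := by
  ext a
  match a with
  | 0 => simp [mon2_apply0]
  | 1 => simp [mon2_apply1]

theorem mon2_eq_iff {a b c d : ℕ} : mon2 a b = mon2 c d ↔ a = c ∧ b = d := by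
  constructor
  · intro h
    constructor
    · have := congrArg (fun x => x 0) h; simpa [mon2_apply0] using this
    · have := congrArg (fun x => x 1) h; simpa [mon2_apply1] using this
  · rintro ⟨rfl, rfl⟩; rfl

theorem deg_mon2 (i j : ℕ) : deg (mon2 i j) = i + j := by
  simp [mon2, deg_add, deg_single]

theorem deg_fin2 (d : Fin 2 →₀ ℕ) : deg d = d 0 + d 1 := by
  conv_lhs => rw [eq_mon2 d]
  rw [deg_mon2]

theorem mon2_single0 (i : ℕ) : mon2 i 0 = Finsupp.single 0 i := by
  simp [mon2]

theorem mon2_single1 (j : ℕ) : mon2 0 j = Finsupp.single 1 j := by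
  simp [mon2]

theorem deg_unit (d : Unit →₀ ℕ) : deg d = d () := by
  conv_lhs => rw [Finsupp.unique_single d]
  rw [deg_single]

end FGLAux
namespace FGLAux

open Finset FGL

variable {A : Type*} [CommRing A] {τ : Type*}

theorem coeff_subst2 (F : MvPowerSeries (Fin 2) A) (g h : MvPowerSeries τ A) (d : τ →₀ ℕ) :
    MvPowerSeries.coeff d (subst2 F g h) =
      ∑ e ∈ range (deg d + 1) ×ˢ range (deg d + 1),
        MvPowerSeries.coeff (mon2 e.1 e.2) F * MvPowerSeries.coeff d (g ^ e.1 * h ^ e.2) :=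
  rfl

theorem coeff_substPS (f : PowerSeries A) (g : MvPowerSeries τ A) (d : τ →₀ ℕ) :
    MvPowerSeries.coeff d (substPS f g) =
      ∑ n ∈ range (deg d + 1),
        PowerSeries.coeff n f * MvPowerSeries.coeff d (g ^ n) :=
  rfl

theorem coeff_pow_eq_zero_w (w : (τ →₀ ℕ) → ℕ)
    (hw : ∀ d e, w (d + e) = w d + w e) {g : MvPowerSeries τ A} {r : ℕ}
    (hg : ∀ d, w d < r → MvPowerSeries.coeff d g = 0) :
    ∀ (n : ℕ) (d : τ →₀ ℕ), w d < r * n → MvPowerSeries.coeff d (g ^ n) = 0 := by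
  classical
  intro n
  induction n with
  | zero => intro d hd; omega
  | succ n ih =>
    intro d hd
    rw [pow_succ, MvPowerSeries.coeff_mul]
    apply Finset.sum_eq_zero
    rintro ⟨d1, d2⟩ hmem
    rw [Finset.HasAntidiagonal.mem_antidiagonal] at hmem
    by_cases h2 : w d2 < r
    · rw [hg d2 h2, mul_zero]
    · have hsum : w d = w d1 + w d2 := by rw [← hmem, hw]
      rw [Nat.mul_succ] at hd
      have h1 : w d1 < r * n := by omega
      rw [ih d1 h1, zero_mul]

theorem coeff_pow_eq_zero_deg {g : MvPowerSeries τ A}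
    (hg : MvPowerSeries.constantCoeff g = 0) {n : ℕ} {d : τ →₀ ℕ} (hd : deg d < n) :
    MvPowerSeries.coeff d (g ^ n) = 0 := by
  refine coeff_pow_eq_zero_w (r := 1) deg deg_add (fun e he => ?_) n d (by omega)
  have : e = 0 := deg_eq_zero (by omega)
  rw [this, MvPowerSeries.coeff_zero_eq_constantCoeff]
  exact hg

theorem coeff_mul_pow_eq_zero {g h : MvPowerSeries τ A}
    (hg : MvPowerSeries.constantCoeff g = 0)
    (hh : MvPowerSeries.constantCoeff h = 0) {d : τ →₀ ℕ} {e1 e2 : ℕ}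
    (hd : deg d < e1 + e2) :
    MvPowerSeries.coeff d (g ^ e1 * h ^ e2) = 0 := by
  classical
  rw [MvPowerSeries.coeff_mul]
  apply Finset.sum_eq_zero
  rintro ⟨d1, d2⟩ hmem
  rw [Finset.HasAntidiagonal.mem_antidiagonal] at hmem
  have hsum : deg d = deg d1 + deg d2 := by rw [← hmem, deg_add]
  by_cases h1 : deg d1 < e1
  · rw [coeff_pow_eq_zero_deg hg h1, zero_mul]
  · have h2 : deg d2 < e2 := by omega
    rw [coeff_pow_eq_zero_deg hh h2, mul_zero]

theorem coeff_subst2_big (F : MvPowerSeries (Fin 2) A) {g h : MvPowerSeries τ A}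
    (hg : MvPowerSeries.constantCoeff g = 0)
    (hh : MvPowerSeries.constantCoeff h = 0) (d : τ →₀ ℕ) {N : ℕ} (hN : deg d ≤ N) :
    MvPowerSeries.coeff d (subst2 F g h) =
      ∑ e ∈ range (N + 1) ×ˢ range (N + 1),
        MvPowerSeries.coeff (mon2 e.1 e.2) F * MvPowerSeries.coeff d (g ^ e.1 * h ^ e.2) := by
  rw [coeff_subst2]
  apply Finset.sum_subset
  · apply Finset.product_subset_product <;>
      exact Finset.range_subset_range.mpr (by omega)
  · rintro ⟨e1, e2⟩ hbig hsmall
    rw [Finset.mem_product, Finset.mem_range, Finset.mem_range] at hsmall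
    have : deg d < e1 + e2 := by
      rcases Nat.lt_or_ge e1 (deg d + 1) with h | h
      · rcases Nat.lt_or_ge e2 (deg d + 1) with h' | h'
        · exact absurd ⟨h, h'⟩ hsmall
        · omega
      · omega
    rw [coeff_mul_pow_eq_zero hg hh this, mul_zero]

theorem coeff_substPS_big (f : PowerSeries A) {g : MvPowerSeries τ A}
    (hg : MvPowerSeries.constantCoeff g = 0) (d : τ →₀ ℕ) {N : ℕ} (hN : deg d ≤ N) :
    MvPowerSeries.coeff d (substPS f g) =
      ∑ n ∈ range (N + 1),
        PowerSeries.coeff n f * MvPowerSeries.coeff d (g ^ n) := by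
  rw [coeff_substPS]
  apply Finset.sum_subset
  · exact Finset.range_subset_range.mpr (by omega)
  · intro n hbig hsmall
    rw [Finset.mem_range] at hsmall
    have : deg d < n := by omega
    rw [coeff_pow_eq_zero_deg hg this, mul_zero]

theorem coeff_substPS_X [DecidableEq τ] (f : PowerSeries A) (i : τ) (d : τ →₀ ℕ) :
    MvPowerSeries.coeff d (substPS f (MvPowerSeries.X i)) =
      if d = Finsupp.single i (deg d) then PowerSeries.coeff (deg d) f else 0 := by
  rw [coeff_substPS]
  have key : ∀ k, PowerSeries.coeff k f * MvPowerSeries.coeff d (MvPowerSeries.X i ^ k) =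
      if k = deg d then
        (if d = Finsupp.single i (deg d) then PowerSeries.coeff (deg d) f else 0)
      else 0 := by
    intro k
    rw [MvPowerSeries.coeff_X_pow]
    by_cases h : d = Finsupp.single i k
    · have hk : deg d = k := by rw [h, deg_single]
      rw [if_pos h, mul_one, if_pos hk.symm, if_pos (by rw [hk]; exact h), hk]
    · rw [if_neg h, mul_zero]
      by_cases hk : k = deg d
      · rw [if_pos hk, if_neg (by rw [← hk]; exact h)]
      · rw [if_neg hk]
  rw [Finset.sum_congr rfl fun k _ => key k]
  rw [Finset.sum_ite_eq' (range (deg d + 1)) (deg d)]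
  rw [if_pos (Finset.mem_range.mpr (by omega))]

end FGLAux
namespace FGLAux

open Finset FGL

variable {A : Type*} [CommRing A]

theorem mon2_add (x y u v : ℕ) : mon2 x y + mon2 u v = mon2 (x + u) (y + v) := by
  ext c
  match c with
  | 0 => simp [Finsupp.add_apply, mon2_apply0]
  | 1 => simp [Finsupp.add_apply, mon2_apply1]

theorem coeff_mul_mon2 (H K : MvPowerSeries (Fin 2) A) (a b : ℕ) :
    MvPowerSeries.coeff (mon2 a b) (H * K) =
      ∑ x ∈ range (a + 1), ∑ y ∈ range (b + 1),
        MvPowerSeries.coeff (mon2 x y) H *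
          MvPowerSeries.coeff (mon2 (a - x) (b - y)) K := by
  classical
  rw [MvPowerSeries.coeff_mul]
  conv_rhs => rw [← Finset.sum_product']
  refine Finset.sum_nbij' (fun e => (e.1 0, e.1 1)) (fun q => (mon2 q.1 q.2, mon2 (a - q.1) (b - q.2)))
    ?_ ?_ ?_ ?_ ?_
  · rintro ⟨d1, d2⟩ hmem
    rw [Finset.HasAntidiagonal.mem_antidiagonal] at hmem
    have h0 : d1 0 + d2 0 = a := by
      have := congrArg (fun x => x 0) hmem
      simpa [Finsupp.add_apply, mon2_apply0] using this
    have h1 : d1 1 + d2 1 = b := by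
      have := congrArg (fun x => x 1) hmem
      simpa [Finsupp.add_apply, mon2_apply1] using this
    simp only [Finset.mem_product, Finset.mem_range]
    omega
  · rintro ⟨x, y⟩ hmem
    simp only [Finset.mem_product, Finset.mem_range] at hmem
    rw [Finset.HasAntidiagonal.mem_antidiagonal, mon2_add]
    congr 1 <;> omega
  · rintro ⟨d1, d2⟩ hmem
    rw [Finset.HasAntidiagonal.mem_antidiagonal] at hmem
    have h0 : d1 0 + d2 0 = a := by
      have := congrArg (fun x => x 0) hmem
      simpa [Finsupp.add_apply, mon2_apply0] using this
    have h1 : d1 1 + d2 1 = b := by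
      have := congrArg (fun x => x 1) hmem
      simpa [Finsupp.add_apply, mon2_apply1] using this
    have e1 : d1 = mon2 (d1 0) (d1 1) := eq_mon2 d1
    have e2 : d2 = mon2 (d2 0) (d2 1) := eq_mon2 d2
    simp only [Prod.mk.injEq]
    constructor
    · exact e1.symm
    · rw [e2]
      rw [mon2_eq_iff]
      omega
  · rintro ⟨x, y⟩ hmem
    simp only [Prod.mk.injEq]
    constructor <;> simp [mon2_apply0, mon2_apply1]
  · rintro ⟨d1, d2⟩ hmem
    rw [Finset.HasAntidiagonal.mem_antidiagonal] at hmem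
    have h0 : d1 0 + d2 0 = a := by
      have := congrArg (fun x => x 0) hmem
      simpa [Finsupp.add_apply, mon2_apply0] using this
    have h1 : d1 1 + d2 1 = b := by
      have := congrArg (fun x => x 1) hmem
      simpa [Finsupp.add_apply, mon2_apply1] using this
    have e2 : mon2 (a - d1 0) (b - d1 1) = d2 := by
      conv_rhs => rw [eq_mon2 d2]
      rw [mon2_eq_iff]
      omega
    rw [e2, ← eq_mon2 d1]

/-- Extraction: `F(x,0) = x` forces the pure-`x` coefficients. -/
theorem cF_x {F : MvPowerSeries (Fin 2) A}
    (h1 : subst2 F (MvPowerSeries.X (0 : ℕ)) 0 = MvPowerSeries.X 0) (i : ℕ) :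
    MvPowerSeries.coeff (mon2 i 0) F = if i = 1 then 1 else 0 := by
  classical
  have : MvPowerSeries.coeff (Finsupp.single (0 : ℕ) i) (subst2 F (MvPowerSeries.X (0 : ℕ)) 0)
      = MvPowerSeries.coeff (Finsupp.single (0 : ℕ) i) (MvPowerSeries.X 0) := by
    rw [MvPowerSeries.coeff_apply, MvPowerSeries.coeff_apply]
    exact congrFun h1 (Finsupp.single (0 : ℕ) i)
  rw [coeff_subst2, deg_single] at this
  rw [Finset.sum_eq_single_of_mem (i, 0)
    (by simp only [Finset.mem_product, Finset.mem_range]; omega)] at this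
  · have hco : MvPowerSeries.coeff (Finsupp.single (0 : ℕ) i)
        ((MvPowerSeries.X 0 : MvPowerSeries ℕ A) ^ i * 0 ^ 0) = 1 := by
      rw [pow_zero, mul_one, MvPowerSeries.coeff_X_pow, if_pos rfl]
    rw [hco, mul_one] at this
    have this2 : MvPowerSeries.coeff (mon2 i 0) F
        = MvPowerSeries.coeff (Finsupp.single (0 : ℕ) i) (MvPowerSeries.X 0) := by
      simpa using this
    rw [this2, MvPowerSeries.coeff_X]
    by_cases h : i = 1
    · subst h; rw [if_pos rfl, if_pos rfl]
    · rw [if_neg h, if_neg (fun hh => h (Finsupp.single_injective (0 : ℕ) hh))]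
  · rintro ⟨e1, e2⟩ hmem hne
    simp only [Finset.mem_product, Finset.mem_range] at hmem
    rcases Nat.eq_zero_or_pos e2 with he2 | he2
    · subst he2
      have he1 : e1 ≠ i := fun h => hne (by rw [h])
      rw [pow_zero, mul_one, MvPowerSeries.coeff_X_pow, if_neg, mul_zero]
      intro h
      exact he1 ((Finsupp.single_injective (0 : ℕ)) h).symm
    · rw [zero_pow (by omega), mul_zero, map_zero, mul_zero]

/-- Extraction: `F(0,y) = y` gives linear coefficient `1` in `y`. -/
theorem cF_y {F : MvPowerSeries (Fin 2) A}
    (h2 : subst2 F 0 (MvPowerSeries.X (1 : ℕ)) = MvPowerSeries.X 1) :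
    MvPowerSeries.coeff (mon2 0 1) F = 1 := by
  classical
  have : MvPowerSeries.coeff (Finsupp.single (1 : ℕ) 1) (subst2 F 0 (MvPowerSeries.X (1 : ℕ)))
      = MvPowerSeries.coeff (Finsupp.single (1 : ℕ) 1) (MvPowerSeries.X 1) := by
    rw [MvPowerSeries.coeff_apply, MvPowerSeries.coeff_apply]
    exact congrFun h2 (Finsupp.single (1 : ℕ) 1)
  rw [coeff_subst2, deg_single] at this
  rw [Finset.sum_eq_single_of_mem (0, 1)
    (by simp only [Finset.mem_product, Finset.mem_range]; omega)] at this
  · have hco : MvPowerSeries.coeff (Finsupp.single (1 : ℕ) 1)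
        ((0 : MvPowerSeries ℕ A) ^ 0 * MvPowerSeries.X 1 ^ 1) = 1 := by
      rw [pow_zero, one_mul, MvPowerSeries.coeff_X_pow, if_pos rfl]
    rw [hco, mul_one] at this
    have this2 : MvPowerSeries.coeff (mon2 0 1) F
        = MvPowerSeries.coeff (Finsupp.single (1 : ℕ) 1) (MvPowerSeries.X 1) := by
      simpa using this
    rw [this2, MvPowerSeries.coeff_X, if_pos rfl]
  · rintro ⟨e1, e2⟩ hmem hne
    simp only [Finset.mem_product, Finset.mem_range] at hmem
    rcases Nat.eq_zero_or_pos e1 with he1 | he1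
    · subst he1
      have he2 : e2 ≠ 1 := fun h => hne (by rw [h])
      rw [pow_zero, one_mul, MvPowerSeries.coeff_X_pow, if_neg, mul_zero]
      intro h
      exact he2 ((Finsupp.single_injective (1 : ℕ)) h).symm
    · rw [zero_pow (by omega), zero_mul, map_zero, mul_zero]

end FGLAux
namespace FGLAux

open Finset FGL

variable {A : Type*} [CommRing A]

theorem mon2_zero : mon2 0 0 = 0 := by simp [mon2]

theorem constantCoeff_F {F : MvPowerSeries (Fin 2) A}
    (h1 : subst2 F (MvPowerSeries.X (0 : ℕ)) 0 = MvPowerSeries.X 0) :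
    MvPowerSeries.constantCoeff F = 0 := by
  have h := cF_x h1 0
  rw [if_neg (by omega)] at h
  rw [← MvPowerSeries.coeff_zero_eq_constantCoeff, ← mon2_zero]
  exact h

theorem mon2_ne_zero_y (a : ℕ) : mon2 a 1 ≠ 0 := by
  intro hh
  have := congrArg (fun x => x 1) hh
  simp [mon2_apply1] at this

theorem coeff_pow_x {F : MvPowerSeries (Fin 2) A}
    (h1 : subst2 F (MvPowerSeries.X (0 : ℕ)) 0 = MvPowerSeries.X 0) (k a : ℕ) :
    MvPowerSeries.coeff (mon2 a 0) (F ^ k) = if a = k then 1 else 0 := by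
  induction k generalizing a with
  | zero =>
    rw [pow_zero, MvPowerSeries.coeff_one]
    by_cases h : a = 0
    · subst h; rw [if_pos mon2_zero, if_pos rfl]
    · rw [if_neg, if_neg h]
      intro hh
      apply h
      have := congrArg (fun x => x 0) hh
      simpa [mon2_apply0] using this
  | succ k ih =>
    rw [pow_succ, coeff_mul_mon2]
    rw [Finset.sum_congr rfl (fun x hx => by
      rw [Finset.sum_range_one, Nat.sub_self, ih x, cF_x h1])]
    simp only [ite_mul, one_mul, zero_mul]
    rw [Finset.sum_ite_eq' (range (a + 1)) k]
    by_cases h : a = k + 1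
    · subst h
      rw [if_pos (Finset.mem_range.mpr (by omega)), if_pos (by omega), if_pos rfl]
    · rw [if_neg h]
      by_cases hk : k ∈ range (a + 1)
      · rw [if_pos hk, if_neg (by rw [Finset.mem_range] at hk; omega)]
      · rw [if_neg hk]

theorem coeff_pow_y {F : MvPowerSeries (Fin 2) A}
    (h1 : subst2 F (MvPowerSeries.X (0 : ℕ)) 0 = MvPowerSeries.X 0) (k a : ℕ) :
    MvPowerSeries.coeff (mon2 a 1) (F ^ k) =
      if k ≤ a + 1 then (k : A) * MvPowerSeries.coeff (mon2 (a + 1 - k) 1) F else 0 := by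
  induction k generalizing a with
  | zero =>
    rw [pow_zero, MvPowerSeries.coeff_one, if_neg (mon2_ne_zero_y a),
      if_pos (Nat.zero_le _)]
    simp
  | succ k ih =>
    rw [pow_succ, coeff_mul_mon2]
    rw [Finset.sum_congr rfl (fun x hx => by
      rw [show (1 : ℕ) + 1 = 2 from rfl, Finset.sum_range_succ, Finset.sum_range_one,
        Nat.sub_zero, Nat.sub_self])]
    rw [Finset.sum_add_distrib]
    have hS1 : ∑ x ∈ range (a + 1),
        MvPowerSeries.coeff (mon2 x 0) (F ^ k) *
          MvPowerSeries.coeff (mon2 (a - x) 1) F =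
        if k ≤ a then MvPowerSeries.coeff (mon2 (a - k) 1) F else 0 := by
      rw [Finset.sum_congr rfl (fun x hx => by rw [coeff_pow_x h1 k x])]
      simp only [ite_mul, one_mul, zero_mul]
      rw [Finset.sum_ite_eq' (range (a + 1)) k]
      by_cases h : k ≤ a
      · rw [if_pos (Finset.mem_range.mpr (by omega)), if_pos h]
      · rw [if_neg (by rw [Finset.mem_range]; omega), if_neg h]
    rw [hS1]
    by_cases hka : k ≤ a
    · have hS2 : ∑ x ∈ range (a + 1),
          MvPowerSeries.coeff (mon2 x 1) (F ^ k) *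
            MvPowerSeries.coeff (mon2 (a - x) 0) F =
          if 1 ≤ a then (k : A) * MvPowerSeries.coeff (mon2 (a - k) 1) F else 0 := by
        rw [Finset.sum_congr rfl (fun x hx => by rw [cF_x h1 (a - x)])]
        by_cases ha : 1 ≤ a
        · rw [if_pos ha]
          rw [Finset.sum_congr rfl (fun x hx => show
            MvPowerSeries.coeff (mon2 x 1) (F ^ k) * (if a - x = 1 then (1:A) else 0)
              = if x = a - 1 then MvPowerSeries.coeff (mon2 x 1) (F ^ k) else 0 from by
            rw [Finset.mem_range] at hx
            by_cases hx1 : x = a - 1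
            · rw [if_pos (by omega), if_pos hx1, mul_one]
            · rw [if_neg (by omega), if_neg hx1, mul_zero])]
          rw [Finset.sum_ite_eq' (range (a + 1)) (a - 1),
            if_pos (Finset.mem_range.mpr (by omega)), ih (a - 1),
            if_pos (by omega), show a - 1 + 1 - k = a - k by omega]
        · rw [if_neg ha]
          apply Finset.sum_eq_zero
          intro x hx
          rw [Finset.mem_range] at hx
          rw [if_neg (by omega), mul_zero]
      rw [hS2, if_pos hka, if_pos (show k + 1 ≤ a + 1 by omega),
        show a + 1 - (k + 1) = a - k by omega]
      by_cases ha : 1 ≤ a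
      · rw [if_pos ha]; push_cast; ring
      · have ha0 : a = 0 := by omega
        have hk0 : k = 0 := by omega
        subst ha0; subst hk0
        rw [if_neg ha]
        norm_num
    · rw [if_neg hka, if_neg (by omega), zero_add]
      apply Finset.sum_eq_zero
      intro x hx
      rw [Finset.mem_range] at hx
      rw [cF_x h1 (a - x)]
      by_cases hax : a - x = 1
      · rw [ih x, if_neg (by omega), zero_mul]
      · rw [if_neg hax, mul_zero]

end FGLAux
namespace FGLAux

open Finset FGL

variable {A : Type*} [CommRing A]

theorem W_pow (φ : MvPowerSeries (Fin 2) A)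
    (hφ : ∀ d : Fin 2 →₀ ℕ, d 1 ≠ 0 → MvPowerSeries.coeff d φ = 0) (e : ℕ) :
    ∀ d : Fin 2 →₀ ℕ, d 1 ≠ 0 → MvPowerSeries.coeff d (φ ^ e) = 0 := by
  classical
  induction e with
  | zero =>
    intro d hd
    rw [pow_zero, MvPowerSeries.coeff_one, if_neg]
    intro h
    rw [h] at hd
    simp at hd
  | succ e ih =>
    intro d hd
    rw [pow_succ, MvPowerSeries.coeff_mul]
    apply Finset.sum_eq_zero
    rintro ⟨d1, d2⟩ hmem
    rw [Finset.HasAntidiagonal.mem_antidiagonal] at hmem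
    have hsplit : d1 1 + d2 1 = d 1 := by
      have := congrArg (fun x => x 1) hmem
      simpa [Finsupp.add_apply] using this
    by_cases h1 : d1 1 = 0
    · rw [hφ d2 (by omega), mul_zero]
    · rw [ih d1 h1, zero_mul]

theorem coeff_f_vanish {p : ℕ} (hp : p.Prime) (hchar : (p : A) = 0)
    {F G : MvPowerSeries (Fin 2) A}
    (h1 : subst2 F (MvPowerSeries.X (0 : ℕ)) 0 = MvPowerSeries.X 0)
    (h2 : subst2 F 0 (MvPowerSeries.X (1 : ℕ)) = MvPowerSeries.X 1)
    {f : PowerSeries A} (hf0 : PowerSeries.constantCoeff f = 0)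
    (hfeq : substPS f F =
      subst2 G (substPS f (MvPowerSeries.X 0)) (substPS f (MvPowerSeries.X 1)))
    (hf1 : PowerSeries.coeff 1 f = 0) :
    ∀ n, ¬ p ∣ n → PowerSeries.coeff n f = 0 := by
  classical
  have hψ2 : ∀ d : Fin 2 →₀ ℕ, d 1 < 2 →
      MvPowerSeries.coeff d (substPS f (MvPowerSeries.X (1 : Fin 2))) = 0 := by
    intro d hd
    rw [coeff_substPS_X]
    split
    case isTrue h =>
      have hd1 : d 1 = deg d := by
        conv_lhs => rw [h]
        simp
      have : deg d = 0 ∨ deg d = 1 := by omega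
      rcases this with h0 | h0 <;> rw [h0]
      · rw [PowerSeries.coeff_zero_eq_constantCoeff]; exact hf0
      · exact hf1
    case isFalse h => rfl
  have hφW : ∀ d : Fin 2 →₀ ℕ, d 1 ≠ 0 →
      MvPowerSeries.coeff d (substPS f (MvPowerSeries.X (0 : Fin 2))) = 0 := by
    intro d hd
    rw [coeff_substPS_X, if_neg]
    intro h
    apply hd
    rw [h]
    simp [Finsupp.single_apply]
  have hRHS : ∀ (a e1 e2 : ℕ),
      MvPowerSeries.coeff (mon2 a 1)
        ((substPS f (MvPowerSeries.X (0 : Fin 2))) ^ e1 *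
          (substPS f (MvPowerSeries.X (1 : Fin 2))) ^ e2) = 0 := by
    intro a e1 e2
    match e2 with
    | 0 =>
      rw [pow_zero, mul_one]
      exact W_pow _ hφW e1 _ (by rw [mon2_apply1]; omega)
    | e2 + 1 =>
      rw [MvPowerSeries.coeff_mul]
      apply Finset.sum_eq_zero
      rintro ⟨d1, d2⟩ hmem
      rw [Finset.HasAntidiagonal.mem_antidiagonal] at hmem
      have hsplit : d1 1 + d2 1 = 1 := by
        have := congrArg (fun x => x 1) hmem
        simpa [Finsupp.add_apply, mon2_apply1] using this
      rw [coeff_pow_eq_zero_w (r := 2) (fun e => e 1)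
        (fun u v => by simp [Finsupp.add_apply]) hψ2 (e2 + 1) d2
        (show d2 1 < 2 * (e2 + 1) by omega), mul_zero]
  intro n
  induction n using Nat.strong_induction_on with
  | _ n ih =>
    intro hn
    by_cases hn0 : n = 0
    · exact absurd (by rw [hn0]; exact dvd_zero p) hn
    by_cases hn1 : n = 1
    · rw [hn1]; exact hf1
    have hn2 : 2 ≤ n := by omega
    have hcc : MvPowerSeries.coeff (mon2 (n - 1) 1) (substPS f F) =
        MvPowerSeries.coeff (mon2 (n - 1) 1)
          (subst2 G (substPS f (MvPowerSeries.X 0)) (substPS f (MvPowerSeries.X 1))) := by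
      rw [MvPowerSeries.coeff_apply, MvPowerSeries.coeff_apply]
      exact congrFun hfeq _
    have hdeg : deg (mon2 (n - 1) 1) = n := by rw [deg_mon2]; omega
    rw [coeff_subst2, hdeg] at hcc
    rw [Finset.sum_eq_zero (fun e _ => by rw [hRHS (n - 1) e.1 e.2, mul_zero])] at hcc
    rw [coeff_substPS, hdeg] at hcc
    rw [Finset.sum_congr rfl (fun k hk => by
      rw [coeff_pow_y h1 k (n - 1),
        if_pos (show k ≤ n - 1 + 1 by rw [Finset.mem_range] at hk; omega)])] at hcc
    rw [Finset.sum_range_succ] at hcc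
    rw [Finset.sum_eq_zero (fun k hk => ?_)] at hcc
    swap
    · rw [Finset.mem_range] at hk
      by_cases hpk : p ∣ k
      · obtain ⟨m, rfl⟩ := hpk
        have hcast : ((p * m : ℕ) : A) = 0 := by push_cast; rw [hchar]; ring
        rw [hcast, zero_mul, mul_zero]
      · rw [ih k (by omega) hpk, zero_mul]
    rw [show n - 1 + 1 - n = 0 by omega, cF_y h2, mul_one, zero_add] at hcc
    -- hcc : PowerSeries.coeff n f * ↑n = 0
    have hco : Nat.gcd p n = 1 := hp.coprime_iff_not_dvd.mpr hn
    have hbez := Nat.gcd_eq_gcd_ab p n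
    rw [hco] at hbez
    have h1A : (1 : A) = ((n : ℕ) : A) * ((Nat.gcdB p n : ℤ) : A) := by
      have hcast := congrArg (fun z : ℤ => (z : A)) hbez
      push_cast at hcast
      rw [hchar] at hcast
      rw [hcast]; ring
    calc PowerSeries.coeff n f = PowerSeries.coeff n f * 1 := (mul_one _).symm
    _ = (PowerSeries.coeff n f * ((n : ℕ) : A)) * ((Nat.gcdB p n : ℤ) : A) := by
        rw [h1A]; ring
    _ = 0 := by rw [hcc, zero_mul]

end FGLAux
namespace FGLAux

open Finset FGL

variable {A : Type*} [CommRing A]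

theorem coeff_comp_X_pow (g : PowerSeries A) {p : ℕ} (hp : 0 < p) (n : ℕ) :
    PowerSeries.coeff n (comp g (PowerSeries.X ^ p)) =
      if p ∣ n then PowerSeries.coeff (n / p) g else 0 := by
  classical
  have hrepr : PowerSeries.coeff n (comp g (PowerSeries.X ^ p)) =
      MvPowerSeries.coeff (Finsupp.single () n)
        (substPS g ((MvPowerSeries.X () : MvPowerSeries Unit A) ^ p)) := rfl
  rw [hrepr, coeff_substPS, deg_single]
  have key : ∀ k, PowerSeries.coeff k g *
      MvPowerSeries.coeff (Finsupp.single () n)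
        (((MvPowerSeries.X () : MvPowerSeries Unit A) ^ p) ^ k) =
      if k = n / p then (if p ∣ n then PowerSeries.coeff (n / p) g else 0) else 0 := by
    intro k
    rw [← pow_mul, MvPowerSeries.coeff_X_pow]
    by_cases h : n = p * k
    · have hdvd : p ∣ n := ⟨k, h⟩
      have hk : k = n / p := by rw [h, Nat.mul_div_cancel_left _ hp]
      rw [if_pos (by rw [h]), mul_one, if_pos hk, if_pos hdvd, hk]
    · rw [if_neg (fun hh => h (Finsupp.single_injective () hh)), mul_zero]
      by_cases hk : k = n / p
      · rw [if_pos hk, if_neg (fun hdvd => h (by rw [hk, Nat.mul_div_cancel' hdvd]))]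
      · rw [if_neg hk]
  rw [Finset.sum_congr rfl (fun k _ => key k),
    Finset.sum_ite_eq' (range (n + 1)) (n / p),
    if_pos (Finset.mem_range.mpr (Nat.lt_succ_of_le (Nat.div_le_self n p)))]

/-- Divide all exponents by `p`. -/
def pdiv (p : ℕ) {σ : Type*} (d : σ →₀ ℕ) : σ →₀ ℕ :=
  d.mapRange (· / p) (Nat.zero_div p)

theorem pdiv_apply (p : ℕ) {σ : Type*} (d : σ →₀ ℕ) (a : σ) :
    pdiv p d a = d a / p := Finsupp.mapRange_apply

theorem pdiv_smul {p : ℕ} (hp : 0 < p) {σ : Type*} (e : σ →₀ ℕ) :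
    pdiv p (p • e) = e := by
  ext a
  rw [pdiv_apply, Finsupp.smul_apply, smul_eq_mul, Nat.mul_div_cancel_left _ hp]

theorem pdiv_zero (p : ℕ) {σ : Type*} : pdiv p (0 : σ →₀ ℕ) = 0 := by
  ext a; rw [pdiv_apply]; simp

theorem pdiv_single (p : ℕ) {σ : Type*} [DecidableEq σ] (i : σ) (m : ℕ) :
    pdiv p (Finsupp.single i m) = Finsupp.single i (m / p) := by
  ext a
  rw [pdiv_apply, Finsupp.single_apply, Finsupp.single_apply]
  split
  · rfl
  · exact Nat.zero_div p

theorem pdiv_le (p : ℕ) {σ : Type*} (d : σ →₀ ℕ) : pdiv p d ≤ d :=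
  Finsupp.le_def.mpr fun a => by rw [pdiv_apply]; exact Nat.div_le_self _ _

end FGLAux
namespace FGLAux

open Finset FGL

variable {A : Type*} [CommRing A]

theorem add_pow_p {B : Type*} [CommRing B] {p : ℕ} (hp : p.Prime) (hB : (p : B) = 0)
    (a b : B) : (a + b) ^ p = a ^ p + b ^ p := by
  rw [add_pow]
  have key : ∀ k ∈ range (p + 1), a ^ k * b ^ (p - k) * (Nat.choose p k : B) =
      (if k = 0 then b ^ p else 0) + (if k = p then a ^ p else 0) := by
    intro k hk
    rw [Finset.mem_range] at hk
    by_cases h0 : k = 0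
    · subst h0
      rw [if_pos rfl, if_neg (fun h => hp.ne_zero h.symm)]
      simp
    · by_cases hkp : k = p
      · subst hkp
        rw [if_neg h0, if_pos rfl]
        simp
      · obtain ⟨m, hm⟩ := hp.dvd_choose_self h0 (by omega)
        rw [if_neg h0, if_neg hkp, hm]
        push_cast
        rw [hB]
        ring
  rw [Finset.sum_congr rfl key, Finset.sum_add_distrib,
    Finset.sum_ite_eq' (range (p + 1)) 0, Finset.sum_ite_eq' (range (p + 1)) p,
    if_pos (Finset.mem_range.mpr (by omega)),
    if_pos (Finset.mem_range.mpr (by omega)), add_comm]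

theorem sum_pow_p {B : Type*} [CommRing B] {p : ℕ} (hp : p.Prime) (hB : (p : B) = 0)
    {ι : Type*} (s : Finset ι) (f : ι → B) :
    (∑ i ∈ s, f i) ^ p = ∑ i ∈ s, f i ^ p := by
  classical
  induction s using Finset.induction_on with
  | empty => simp [zero_pow hp.ne_zero]
  | @insert a s ha ih =>
    rw [Finset.sum_insert ha, add_pow_p hp hB, ih, Finset.sum_insert ha]

theorem natCast_mvps_eq_zero {p : ℕ} {σ : Type*} (hchar : (p : A) = 0) :
    ((p : ℕ) : MvPowerSeries σ A) = 0 := by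
  rw [← map_natCast (MvPowerSeries.C) p, hchar, map_zero]

theorem coeff_frob_pow {p : ℕ} (hp : p.Prime) (hchar : (p : A) = 0)
    (F : MvPowerSeries (Fin 2) A) (m : ℕ) (d : Fin 2 →₀ ℕ) :
    MvPowerSeries.coeff d (frobMv p F ^ m) = MvPowerSeries.coeff d (F ^ m) ^ p := by
  classical
  induction m generalizing d with
  | zero =>
    rw [pow_zero, pow_zero, MvPowerSeries.coeff_one]
    split
    · rw [one_pow]
    · rw [zero_pow hp.ne_zero]
  | succ m ih =>
    rw [pow_succ, pow_succ, MvPowerSeries.coeff_mul, MvPowerSeries.coeff_mul,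
      sum_pow_p hp hchar]
    apply Finset.sum_congr rfl
    rintro ⟨d1, d2⟩ _
    rw [ih d1, mul_pow]
    rfl

/-- `K` is obtained from `L` by substituting `x ↦ x^p, y ↦ y^p`. -/
def ExRel (p : ℕ) (K L : MvPowerSeries (Fin 2) A) : Prop :=
  ∀ d : Fin 2 →₀ ℕ, MvPowerSeries.coeff d K =
    if p • pdiv p d = d then MvPowerSeries.coeff (pdiv p d) L else 0

theorem exrel_one {p : ℕ} (hp : 0 < p) : ExRel (A := A) p 1 1 := by
  classical
  intro d
  by_cases hd : d = 0
  · subst hd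
    rw [MvPowerSeries.coeff_one, if_pos rfl, if_pos (by rw [pdiv_zero]; simp),
      pdiv_zero, MvPowerSeries.coeff_one, if_pos rfl]
  · rw [MvPowerSeries.coeff_one, if_neg hd]
    by_cases hsm : p • pdiv p d = d
    · rw [if_pos hsm, MvPowerSeries.coeff_one, if_neg]
      intro h0
      apply hd
      rw [← hsm, h0, smul_zero]
    · rw [if_neg hsm]

theorem exrel_mul {p : ℕ} (hp : 0 < p) {K1 K2 L1 L2 : MvPowerSeries (Fin 2) A}
    (h1 : ExRel p K1 L1) (h2 : ExRel p K2 L2) : ExRel p (K1 * K2) (L1 * L2) := by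
  classical
  intro d
  rw [MvPowerSeries.coeff_mul]
  by_cases hd : p • pdiv p d = d
  · rw [if_pos hd, MvPowerSeries.coeff_mul]
    have himg : (Finset.HasAntidiagonal.antidiagonal (pdiv p d)).image
        (fun y : (Fin 2 →₀ ℕ) × (Fin 2 →₀ ℕ) => (p • y.1, p • y.2)) ⊆
        Finset.HasAntidiagonal.antidiagonal d := by
      intro x hx
      rw [Finset.mem_image] at hx
      obtain ⟨y, hy, rfl⟩ := hx
      rw [Finset.HasAntidiagonal.mem_antidiagonal] at hy ⊢
      rw [← smul_add, hy, hd]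
    have hvan : ∀ x ∈ Finset.HasAntidiagonal.antidiagonal d,
        x ∉ (Finset.HasAntidiagonal.antidiagonal (pdiv p d)).image
          (fun y : (Fin 2 →₀ ℕ) × (Fin 2 →₀ ℕ) => (p • y.1, p • y.2)) →
        MvPowerSeries.coeff x.1 K1 * MvPowerSeries.coeff x.2 K2 = 0 := by
      intro x hx hnx
      rw [Finset.HasAntidiagonal.mem_antidiagonal] at hx
      by_cases hx1 : p • pdiv p x.1 = x.1
      · by_cases hx2 : p • pdiv p x.2 = x.2
        · exfalso
          apply hnx
          rw [Finset.mem_image]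
          refine ⟨(pdiv p x.1, pdiv p x.2), ?_, Prod.ext hx1 hx2⟩
          rw [Finset.HasAntidiagonal.mem_antidiagonal]
          have hkey : p • (pdiv p x.1 + pdiv p x.2) = p • pdiv p d := by
            rw [smul_add, hx1, hx2, hx]
            exact hd.symm
          have := congrArg (pdiv p) hkey
          rwa [pdiv_smul hp, pdiv_smul hp] at this
        · rw [h2 x.2, if_neg hx2, mul_zero]
      · rw [h1 x.1, if_neg hx1, zero_mul]
    rw [← Finset.sum_subset himg hvan]
    have hinj : ∀ y ∈ Finset.HasAntidiagonal.antidiagonal (pdiv p d), ∀ z ∈ Finset.HasAntidiagonal.antidiagonal (pdiv p d),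
        (fun y : (Fin 2 →₀ ℕ) × (Fin 2 →₀ ℕ) => (p • y.1, p • y.2)) y =
          (fun y : (Fin 2 →₀ ℕ) × (Fin 2 →₀ ℕ) => (p • y.1, p • y.2)) z → y = z := by
      rintro ⟨y1, y2⟩ - ⟨z1, z2⟩ - hyz
      simp only [Prod.mk.injEq] at hyz
      obtain ⟨hy1, hy2⟩ := hyz
      have e1 := congrArg (pdiv p) hy1
      have e2 := congrArg (pdiv p) hy2
      rw [pdiv_smul hp, pdiv_smul hp] at e1 e2
      exact Prod.ext e1 e2
    rw [Finset.sum_image hinj]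
    apply Finset.sum_congr rfl
    rintro ⟨y1, y2⟩ -
    rw [h1, h2, if_pos (by rw [pdiv_smul hp]), if_pos (by rw [pdiv_smul hp]),
      pdiv_smul hp, pdiv_smul hp]
  · rw [if_neg hd]
    apply Finset.sum_eq_zero
    rintro ⟨d1, d2⟩ hmem
    rw [Finset.HasAntidiagonal.mem_antidiagonal] at hmem
    by_cases hx1 : p • pdiv p d1 = d1
    · by_cases hx2 : p • pdiv p d2 = d2
      · exfalso
        apply hd
        have hkey : p • (pdiv p d1 + pdiv p d2) = d := by rw [smul_add, hx1, hx2, hmem]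
        rw [← hkey, pdiv_smul hp]
      · rw [h2 d2, if_neg hx2, mul_zero]
    · rw [h1 d1, if_neg hx1, zero_mul]

theorem exrel_pow {p : ℕ} (hp : 0 < p) {K L : MvPowerSeries (Fin 2) A}
    (h : ExRel p K L) (m : ℕ) : ExRel p (K ^ m) (L ^ m) := by
  induction m with
  | zero => rw [pow_zero, pow_zero]; exact exrel_one hp
  | succ m ih => rw [pow_succ, pow_succ]; exact exrel_mul hp ih h

theorem monomial_pow_smul (e : Fin 2 →₀ ℕ) (c : A) (n : ℕ) :
    (MvPowerSeries.monomial e c) ^ n = MvPowerSeries.monomial (n • e) (c ^ n) := by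
  induction n with
  | zero =>
    rw [pow_zero, pow_zero, zero_smul]
    exact (MvPowerSeries.monomial_zero_one).symm
  | succ n ih =>
    rw [pow_succ, ih, MvPowerSeries.monomial_mul_monomial, succ_nsmul, ← pow_succ]

theorem exrel_pow_p {p : ℕ} (hp : p.Prime) (hchar : (p : A) = 0)
    (H : MvPowerSeries (Fin 2) A) : ExRel p (H ^ p) (frobMv p H) := by
  classical
  intro d
  set T : MvPowerSeries (Fin 2) A :=
    ∑ e ∈ Finset.Iic d, (MvPowerSeries.monomial e) (MvPowerSeries.coeff e H) with hT
  have hTc : ∀ e ∈ Finset.Iic d, MvPowerSeries.coeff e T = MvPowerSeries.coeff e H := by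
    intro e he
    rw [hT, map_sum,
      Finset.sum_congr rfl (fun e' _ => MvPowerSeries.coeff_monomial e e' _),
      Finset.sum_ite_eq (Finset.Iic d) e (fun e' => MvPowerSeries.coeff e' H),
      if_pos he]
  have hcong : ∀ (n : ℕ) (e : Fin 2 →₀ ℕ), e ≤ d →
      MvPowerSeries.coeff e (H ^ n) = MvPowerSeries.coeff e (T ^ n) := by
    intro n
    induction n with
    | zero => intro e _; rw [pow_zero, pow_zero]
    | succ n ih =>
      intro e he
      rw [pow_succ, pow_succ, MvPowerSeries.coeff_mul, MvPowerSeries.coeff_mul]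
      apply Finset.sum_congr rfl
      rintro ⟨d1, d2⟩ hmem
      rw [Finset.HasAntidiagonal.mem_antidiagonal] at hmem
      have hle1 : d1 ≤ e := Finsupp.le_def.mpr fun a => by
        have := congrArg (fun x => x a) hmem
        simp only [Finsupp.add_apply] at this
        omega
      have hle2 : d2 ≤ e := Finsupp.le_def.mpr fun a => by
        have := congrArg (fun x => x a) hmem
        simp only [Finsupp.add_apply] at this
        omega
      rw [ih d1 (le_trans hle1 he), hTc d2 (Finset.mem_Iic.mpr (le_trans hle2 he))]
  have hTp : T ^ p = ∑ e ∈ Finset.Iic d,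
      (MvPowerSeries.monomial (p • e)) (MvPowerSeries.coeff e H ^ p) := by
    rw [hT, sum_pow_p hp (natCast_mvps_eq_zero hchar)]
    exact Finset.sum_congr rfl (fun e _ => monomial_pow_smul e _ p)
  rw [hcong p d le_rfl, hTp, map_sum,
    Finset.sum_congr rfl (fun e _ => MvPowerSeries.coeff_monomial d (p • e) _)]
  by_cases hd : p • pdiv p d = d
  · rw [if_pos hd]
    rw [Finset.sum_eq_single_of_mem (pdiv p d) (Finset.mem_Iic.mpr (pdiv_le p d))]
    · rw [if_pos hd.symm]
      rfl
    · intro e _ hne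
      rw [if_neg]
      intro h
      exact hne ((congrArg (pdiv p) h).trans (pdiv_smul hp.pos e)).symm
  · rw [if_neg hd]
    apply Finset.sum_eq_zero
    intro e _
    rw [if_neg]
    intro h
    apply hd
    rw [h, pdiv_smul hp.pos]

end FGLAux
namespace FGLAux

open Finset FGL

variable {A : Type*} [CommRing A]

theorem deg_zero {σ : Type*} : deg (0 : σ →₀ ℕ) = 0 := by simp [deg]

theorem deg_smul2 (p : ℕ) (d : Fin 2 →₀ ℕ) : deg (p • d) = p * deg d := by
  rw [deg_fin2, deg_fin2, Finsupp.smul_apply, Finsupp.smul_apply, smul_eq_mul,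
    smul_eq_mul]
  ring

theorem coeff_zero_substPS_X (f : PowerSeries A) (i : Fin 2) :
    MvPowerSeries.constantCoeff (substPS f (MvPowerSeries.X i)) =
      PowerSeries.constantCoeff f := by
  rw [← MvPowerSeries.coeff_zero_eq_constantCoeff, coeff_substPS_X,
    if_pos (by rw [deg_zero, Finsupp.single_zero]), deg_zero,
    PowerSeries.coeff_zero_eq_constantCoeff]

theorem exrel_substPS_X {p : ℕ} (hp : 0 < p) {f g : PowerSeries A}
    (hco : ∀ n, PowerSeries.coeff n f =
      if p ∣ n then PowerSeries.coeff (n / p) g else 0)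
    (i : Fin 2) : ExRel p (substPS f (MvPowerSeries.X i)) (substPS g (MvPowerSeries.X i)) := by
  classical
  intro d
  by_cases hsing : d = Finsupp.single i (deg d)
  · have hpd : pdiv p d = Finsupp.single i (deg d / p) := by
      conv_lhs => rw [hsing]
      rw [pdiv_single]
    by_cases hdvd : p ∣ deg d
    · have hd : p • pdiv p d = d := by
        rw [hpd, Finsupp.smul_single, smul_eq_mul, Nat.mul_div_cancel' hdvd, ← hsing]
      rw [coeff_substPS_X, if_pos hsing, hco (deg d), if_pos hdvd, if_pos hd,
        coeff_substPS_X, hpd, deg_single, if_pos rfl]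
    · have hd : ¬ p • pdiv p d = d := by
        intro hd
        apply hdvd
        have happ := congrArg (fun x => x i) hd
        simp only [Finsupp.smul_apply, smul_eq_mul, pdiv_apply] at happ
        have hdi : d i = deg d := by
          conv_lhs => rw [hsing]
          simp
        rw [hdi] at happ
        exact ⟨deg d / p, happ.symm⟩
      rw [coeff_substPS_X, if_pos hsing, hco (deg d), if_neg hdvd, if_neg hd]
  · rw [coeff_substPS_X, if_neg hsing]
    by_cases hd : p • pdiv p d = d
    · rw [if_pos hd, coeff_substPS_X, if_neg]
      intro hpd
      apply hsing
      have hdeg : deg d = p * deg (pdiv p d) := by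
        conv_lhs => rw [← hd]
        rw [deg_smul2]
      conv_lhs => rw [← hd, hpd]
      rw [Finsupp.smul_single, hdeg, smul_eq_mul]
    · rw [if_neg hd]

theorem subst_bridge {p : ℕ} (hp : p.Prime) (hchar : (p : A) = 0)
    {F G : MvPowerSeries (Fin 2) A} {f g : PowerSeries A}
    (hco : ∀ n, PowerSeries.coeff n f =
      if p ∣ n then PowerSeries.coeff (n / p) g else 0)
    (hg0 : PowerSeries.constantCoeff g = 0)
    (hfeq : substPS f F =
      subst2 G (substPS f (MvPowerSeries.X 0)) (substPS f (MvPowerSeries.X 1))) :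
    substPS g (frobMv p F) =
      subst2 G (substPS g (MvPowerSeries.X 0)) (substPS g (MvPowerSeries.X 1)) := by
  classical
  apply MvPowerSeries.ext
  intro d
  have hPD : pdiv p (p • d) = d := pdiv_smul hp.pos d
  have hstep : MvPowerSeries.coeff (p • d) (substPS f F) =
      MvPowerSeries.coeff (p • d)
        (subst2 G (substPS f (MvPowerSeries.X 0)) (substPS f (MvPowerSeries.X 1))) := by
    rw [MvPowerSeries.coeff_apply, MvPowerSeries.coeff_apply]
    exact congrFun hfeq _
  have hL : MvPowerSeries.coeff (p • d) (substPS f F) =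
      MvPowerSeries.coeff d (substPS g (frobMv p F)) := by
    rw [coeff_substPS, coeff_substPS, deg_smul2]
    have himg : (range (deg d + 1)).image (fun m => p * m) ⊆ range (p * deg d + 1) := by
      intro k hk
      rw [Finset.mem_image] at hk
      obtain ⟨m, hm, rfl⟩ := hk
      rw [Finset.mem_range] at hm ⊢
      have := Nat.mul_le_mul_left p (show m ≤ deg d by omega)
      omega
    have hzero : ∀ k ∈ range (p * deg d + 1),
        k ∉ (range (deg d + 1)).image (fun m => p * m) →
        PowerSeries.coeff k f * MvPowerSeries.coeff (p • d) (F ^ k) = 0 := by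
      intro k hk hknot
      by_cases hpk : p ∣ k
      · exfalso
        apply hknot
        rw [Finset.mem_image]
        obtain ⟨m, rfl⟩ := hpk
        refine ⟨m, Finset.mem_range.mpr ?_, rfl⟩
        rw [Finset.mem_range] at hk
        by_contra hcon
        have h1 := Nat.mul_le_mul_left p (show deg d + 1 ≤ m by omega)
        have h2 : p * (deg d + 1) = p * deg d + p := by ring
        have h3 : 0 < p := hp.pos
        omega
      · rw [hco k, if_neg hpk, zero_mul]
    rw [← Finset.sum_subset himg hzero]
    have hinj : ∀ y ∈ range (deg d + 1), ∀ z ∈ range (deg d + 1),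
        p * y = p * z → y = z := fun y _ z _ h => Nat.eq_of_mul_eq_mul_left hp.pos h
    rw [Finset.sum_image hinj]
    apply Finset.sum_congr rfl
    intro m _
    rw [hco (p * m), if_pos ⟨m, rfl⟩, Nat.mul_div_cancel_left _ hp.pos]
    congr 1
    rw [pow_mul, exrel_pow hp.pos (exrel_pow_p hp hchar F) m (p • d),
      if_pos (by rw [hPD]), hPD, coeff_frob_pow hp hchar]
  have hR : MvPowerSeries.coeff (p • d)
      (subst2 G (substPS f (MvPowerSeries.X 0)) (substPS f (MvPowerSeries.X 1))) =
      MvPowerSeries.coeff d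
        (subst2 G (substPS g (MvPowerSeries.X 0)) (substPS g (MvPowerSeries.X 1))) := by
    have hφg0 : MvPowerSeries.constantCoeff
        (substPS g (MvPowerSeries.X (0 : Fin 2))) = 0 := by
      rw [coeff_zero_substPS_X, hg0]
    have hψg0 : MvPowerSeries.constantCoeff
        (substPS g (MvPowerSeries.X (1 : Fin 2))) = 0 := by
      rw [coeff_zero_substPS_X, hg0]
    rw [coeff_subst2, deg_smul2,
      coeff_subst2_big G hφg0 hψg0 d
        (show deg d ≤ p * deg d from Nat.le_mul_of_pos_left _ hp.pos)]
    apply Finset.sum_congr rfl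
    rintro ⟨e1, e2⟩ -
    congr 1
    have hrel := exrel_mul hp.pos
      (exrel_pow hp.pos (exrel_substPS_X hp.pos hco 0) e1)
      (exrel_pow hp.pos (exrel_substPS_X hp.pos hco 1) e2)
    rw [hrel (p • d), if_pos (by rw [hPD]), hPD]
  rw [← hL, ← hR]
  exact hstep

end FGLAux
/-- A homomorphism of formal group laws in characteristic `p` whose linear
coefficient vanishes factors uniquely through the relative Frobenius: there is a
unique `g` with `f(x) = g(x^p)`, and this `g` is a homomorphism `F^{(p)} → G`. -/
theorem hom_with_zero_derivative_factors_through_frobenius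
    (p : ℕ) (hp : p.Prime) (A : Type*) [CommRing A] (hchar : (p : A) = 0)
    (F G : MvPowerSeries (Fin 2) A) (hF : IsFGL F) (hG : IsFGL G)
    (f : PowerSeries A) (hf : IsHom F G f)
    (hf1 : PowerSeries.coeff 1 f = 0) :
    (∃! g : PowerSeries A, f = comp g (PowerSeries.X ^ p)) ∧
    ∀ g : PowerSeries A, f = comp g (PowerSeries.X ^ p) →
      IsHom (frobMv p F) G g := by
  classical
  obtain ⟨hf0, hfeq⟩ := hf
  obtain ⟨h1, h2, -, -⟩ := hF
  have hvan := FGLAux.coeff_f_vanish hp hchar h1 h2 hf0 hfeq hf1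
  have hcomp : ∀ g : PowerSeries A, f = comp g (PowerSeries.X ^ p) →
      ∀ n, PowerSeries.coeff n f =
        if p ∣ n then PowerSeries.coeff (n / p) g else 0 := by
    intro g hg n
    conv_lhs => rw [hg]
    exact FGLAux.coeff_comp_X_pow g hp.pos n
  set g0 : PowerSeries A := PowerSeries.mk (fun m => PowerSeries.coeff (p * m) f)
    with hg0def
  have hfg0 : f = comp g0 (PowerSeries.X ^ p) := by
    apply PowerSeries.ext
    intro n
    rw [FGLAux.coeff_comp_X_pow g0 hp.pos n]
    by_cases hdvd : p ∣ n
    · rw [if_pos hdvd, hg0def, PowerSeries.coeff_mk, Nat.mul_div_cancel' hdvd]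
    · rw [if_neg hdvd]
      exact hvan n hdvd
  constructor
  · refine ⟨g0, hfg0, ?_⟩
    intro y hy
    apply PowerSeries.ext
    intro m
    have h1' := hcomp y hy (p * m)
    rw [if_pos ⟨m, rfl⟩, Nat.mul_div_cancel_left _ hp.pos] at h1'
    rw [hg0def, PowerSeries.coeff_mk]
    exact h1'.symm
  · intro g hg
    have hco := hcomp g hg
    have hgc0 : PowerSeries.constantCoeff g = 0 := by
      have h0 := hco 0
      rw [if_pos (dvd_zero p), Nat.zero_div] at h0
      rw [← PowerSeries.coeff_zero_eq_constantCoeff, ← h0,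
        PowerSeries.coeff_zero_eq_constantCoeff]
      exact hf0
    exact ⟨hgc0, FGLAux.subst_bridge hp hchar hco hgc0 hfeq⟩
end
end
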